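/- arXiv:2009.06839 — 7 statements merged into one kernel-verified Lean document; each statement's English description precedes it below -/
import Mathlib

section
/- Let N ≥ 1, k ≥ 1, ℓ ∈ ℝ^N, p ∈ ℂ. Let u₂, …, u_{N+k} ∈ ℂ be pairwise distinct and v₁, …, v_k ∈ ℂ be pairwise distinct, such that u_i ≠ v_j for all 2 ≤ i ≤ N+k and 1 ≤ j ≤ k, and v₁ ∉ {u₂, …, u_{N+k}}. Then, in the punctured limit u₁ → v₁ (u₁ ≠ v₁), the supersymmetric Bessel lift 𝓑_{ℓ,p}(u₁, u₂, …, u_{N+k} / v₁, …, v_k) converges to 𝓑_{ℓ,p}(u₂, …, u_{N+k} / v₂, …, v_k), where for k = 1 the limit is interpreted as the multivariate Bessel function 𝓑_ℓ(u₂, …, u_{N+1}). -/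
open Complex Finset Filter Topology

noncomputable section

/-- Vandermonde product `Δ(w) = ∏_{i<j} (w i - w j)`. -/
def vprod {m : ℕ} (w : Fin m → ℂ) : ℂ :=
  ∏ i : Fin m, ∏ j : Fin m, if i < j then w i - w j else 1

/-- `D(x;y) = ∏_{i,j} (x i + y j)`. -/
def dprod {m n : ℕ} (x : Fin m → ℂ) (y : Fin n → ℂ) : ℂ :=
  ∏ i : Fin m, ∏ j : Fin n, (x i + y j)

/-- The `(N+k) × (N+k)` matrix `(E_p(u;v) | A_ℓ(u))`: the first `k` columns have entries
`e^{p (u_i - v_j)}/(u_i - v_j)` and the last `N` columns have entries `e^{u_i ℓ_j}`. -/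
def besselLiftMatrix (N k : ℕ) (l : Fin N → ℝ) (p : ℂ)
    (u : Fin (N + k) → ℂ) (v : Fin k → ℂ) :
    Matrix (Fin (N + k)) (Fin (N + k)) ℂ :=
  Matrix.of fun i j =>
    if h : (j : ℕ) < k then Complex.exp (p * (u i - v ⟨j, h⟩)) / (u i - v ⟨j, h⟩)
    else Complex.exp (u i * (l ⟨(j : ℕ) - k, by have := j.isLt; omega⟩ : ℂ))

/-- The supersymmetric lift `𝓑_{ℓ,p}(u / v)` of the multivariate Bessel function:
`(-1)^{Nk} · D(u;-v)/(Δ(u)Δ(-v)) · det(E_p(u;v) | A_ℓ(u))`.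
For `k = 0` this is the multivariate Bessel function `𝓑_ℓ(u)`. -/
def besselLift (N k : ℕ) (l : Fin N → ℝ) (p : ℂ)
    (u : Fin (N + k) → ℂ) (v : Fin k → ℂ) : ℂ :=
  (-1 : ℂ) ^ (N * k) * dprod u (fun j => -v j) /
      (vprod u * vprod fun j => -v j) *
    (besselLiftMatrix N k l p u v).det

lemma vprod_cons {m : ℕ} (z : ℂ) (w : Fin m → ℂ) :
    vprod (Fin.cons z w) = (∏ i, (z - w i)) * vprod w := by
  unfold vprod
  rw [Fin.prod_univ_succ]
  congr 1
  · rw [Fin.prod_univ_succ]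
    simp [Fin.succ_pos]
  · apply Finset.prod_congr rfl
    intro i _
    rw [Fin.prod_univ_succ]
    simp [Fin.succ_lt_succ_iff]

lemma vprod_ne_zero {m : ℕ} {w : Fin m → ℂ} (hw : Function.Injective w) : vprod w ≠ 0 := by
  unfold vprod
  apply Finset.prod_ne_zero_iff.2
  intro i _
  apply Finset.prod_ne_zero_iff.2
  intro j _
  split
  · exact sub_ne_zero.2 fun h => (ne_of_lt ‹i < j›) (hw h)
  · exact one_ne_zero

lemma vprod_tail {m : ℕ} (w : Fin (m+1) → ℂ) :
    vprod w = (∏ j : Fin m, (w 0 - w j.succ)) * vprod (Fin.tail w) := by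
  conv_lhs => rw [← Fin.cons_self_tail w]
  rw [vprod_cons]
  rfl

/-- In the punctured limit `u₁ → v₁`, the supersymmetric Bessel lift
`𝓑_{ℓ,p}(u₁, u₂, …, u_{N+k} / v₁, …, v_k)` converges to
`𝓑_{ℓ,p}(u₂, …, u_{N+k} / v₂, …, v_k)` (which, for `k = 1`, is the multivariate
Bessel function `𝓑_ℓ(u₂, …, u_{N+1})`).  Here the number of dual variables is `k + 1 ≥ 1`. -/
theorem statement0 (N k : ℕ) (hN : 1 ≤ N) (l : Fin N → ℝ) (p : ℂ)
    (u : Fin (N + k) → ℂ) (v : Fin (k + 1) → ℂ)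
    (hu : Function.Injective u) (hv : Function.Injective v)
    (huv : ∀ (i : Fin (N + k)) (j : Fin (k + 1)), u i ≠ v j) :
    Tendsto (fun z : ℂ => besselLift N (k + 1) l p (Fin.cons z u) v)
      (𝓝[≠] (v 0)) (𝓝 (besselLift N k l p u (Fin.tail v))) := by
  haveI : NeZero (N + (k+1)) := ⟨by omega⟩
  set M : ℂ → Matrix (Fin (N + k + 1)) (Fin (N + k + 1)) ℂ :=
    fun z => besselLiftMatrix N (k+1) l p (Fin.cons z u) v with hM
  set Mc : ℂ → Matrix (Fin (N + k + 1)) (Fin (N + k + 1)) ℂ :=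
    fun z => (M z).updateRow 0 (fun j => if j = 0 then Complex.exp (p * (z - v 0))
      else (z - v 0) * M z 0 j) with hMc
  -- nonvanishing facts
  have hvs : ∀ j : Fin k, v j.succ - v 0 ≠ 0 := fun j =>
    sub_ne_zero.2 fun h => Fin.succ_ne_zero j (hv h)
  have hA : (∏ j : Fin k, (v j.succ - v 0)) ≠ 0 :=
    Finset.prod_ne_zero_iff.2 fun j _ => hvs j
  have hB0 : (∏ i, (v 0 - u i)) ≠ 0 :=
    Finset.prod_ne_zero_iff.2 fun i _ => sub_ne_zero.2 fun h => huv i 0 h.symm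
  have hVu : vprod u ≠ 0 := vprod_ne_zero hu
  have hVv : vprod (fun j : Fin k => -v j.succ) ≠ 0 :=
    vprod_ne_zero (fun a b h => Fin.succ_injective _ (hv (neg_injective h)))
  have hVvfull : vprod (fun j : Fin (k+1) => -v j) ≠ 0 :=
    vprod_ne_zero (fun a b h => hv (neg_injective h))
  -- entry (0,0)
  have hM00 : ∀ z : ℂ, M z 0 0 = Complex.exp (p * (z - v 0)) / (z - v 0) := by
    intro z
    have h0 : ((0:Fin (N+k+1)):ℕ) < k+1 := by simp
    show (besselLiftMatrix N (k+1) l p (Fin.cons z u) v) 0 0 = _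
    rw [besselLiftMatrix]
    simp only [Matrix.of_apply]
    rw [dif_pos h0]
    simp
  -- det scaling for z ≠ v 0
  have hdet : ∀ z : ℂ, z ≠ v 0 → (Mc z).det = (z - v 0) * (M z).det := by
    intro z hz
    have hrow : (fun j : Fin (N+k+1) => if j = 0 then Complex.exp (p * (z - v 0))
        else (z - v 0) * M z 0 j) = (z - v 0) • (M z 0) := by
      funext j
      by_cases hj : j = 0
      · subst hj
        rw [if_pos rfl, Pi.smul_apply, smul_eq_mul, hM00 z,
          mul_div_cancel₀ _ (sub_ne_zero.2 hz)]
      · simp [if_neg hj]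
    show ((M z).updateRow 0 _).det = _
    rw [hrow, Matrix.det_updateRow_smul, Matrix.updateRow_eq_self]
  -- dprod splitting
  have hd : ∀ z : ℂ, dprod (Fin.cons z u) (fun j => -v j)
      = (z - v 0) * ((∏ j : Fin k, (z - v j.succ)) * dprod u (fun j => -v j)) := by
    intro z
    simp only [dprod]
    rw [Fin.prod_univ_succ]
    simp only [Fin.cons_zero, Fin.cons_succ]
    rw [Fin.prod_univ_succ]
    have hP : (∏ j : Fin k, (z + -v j.succ)) = ∏ j : Fin k, (z - v j.succ) :=
      Finset.prod_congr rfl fun j _ => (sub_eq_add_neg _ _).symm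
    rw [hP]
    ring
  -- unfolding besselLift on both sides (definitional)
  have hbl : ∀ z : ℂ, besselLift N (k+1) l p (Fin.cons z u) v
      = (-1:ℂ)^(N*(k+1)) * dprod (Fin.cons z u) (fun j => -v j) /
          (vprod (Fin.cons z u) * vprod (fun j : Fin (k+1) => -v j)) * (M z).det :=
    fun z => rfl
  set B : Matrix (Fin (N+k)) (Fin (N+k)) ℂ := besselLiftMatrix N k l p u (Fin.tail v) with hBdef
  have hbl2 : besselLift N k l p u (Fin.tail v)
      = (-1:ℂ)^(N*k) * dprod u (fun j : Fin k => -v j.succ) /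
          (vprod u * vprod (fun j : Fin k => -v j.succ)) * B.det := rfl
  -- the continuous surrogate
  set G : ℂ → ℂ := fun z => (-1:ℂ)^(N*(k+1)) *
      ((∏ j : Fin k, (z - v j.succ)) * dprod u (fun j : Fin (k+1) => -v j)) /
      (vprod (Fin.cons z u) * vprod (fun j : Fin (k+1) => -v j)) * (Mc z).det with hG
  -- key pointwise identity
  have key : ∀ z : ℂ, z ≠ v 0 → besselLift N (k+1) l p (Fin.cons z u) v = G z := by
    intro z hz
    rw [hbl z, hd z, hG]
    show _ = _ * _ / _ * (Mc z).det
    rw [hdet z hz]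
    ring
  -- determinant value at v 0
  have hMc0row : ∀ j, Mc (v 0) 0 j = if j = 0 then 1 else 0 := by
    intro j
    show ((M (v 0)).updateRow 0 _) 0 j = _
    rw [Matrix.updateRow_self]
    by_cases hj : j = 0 <;> simp [hj]
  have hsub : (Mc (v 0)).submatrix Fin.succ Fin.succ = B := by
    ext i j
    show ((M (v 0)).updateRow 0 (fun j' => if j' = 0 then Complex.exp (p * (v 0 - v 0))
      else (v 0 - v 0) * M (v 0) 0 j')) i.succ j.succ = B i j
    rw [Matrix.updateRow_ne (Fin.succ_ne_zero i)]
    show besselLiftMatrix N (k+1) l p (Fin.cons (v 0) u) v i.succ j.succ = _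
    rw [hBdef]
    show _ = besselLiftMatrix N k l p u (Fin.tail v) i j
    simp only [besselLiftMatrix, Matrix.of_apply, Fin.cons_succ]
    by_cases h : (j:ℕ) < k
    · have h1 : ((j.succ : Fin (N+k+1)) : ℕ) < k + 1 := by
        simp only [Fin.val_succ]; omega
      rw [dif_pos h1, dif_pos h]
      rfl
    · have h1 : ¬(((j.succ : Fin (N+k+1)) : ℕ) < k + 1) := by
        simp only [Fin.val_succ]; omega
      rw [dif_neg h1, dif_neg h]
      have hval2 : ((j.succ : Fin (N+k+1)) : ℕ) - (k+1) = (j : ℕ) - k := by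
        simp only [Fin.val_succ]; omega
      simp only [hval2]
  have hMc0det : (Mc (v 0)).det = B.det := by
    rw [Matrix.det_succ_row_zero (Mc (v 0))]
    rw [Finset.sum_eq_single 0]
    · rw [← hsub]; simp [hMc0row, Fin.succAbove_zero]
    · intro j _ hj0
      simp [hMc0row, hj0]
    · intro h; exact absurd (Finset.mem_univ 0) h
  -- value of the surrogate at v 0
  have hdu : dprod u (fun j : Fin (k+1) => -v j)
      = (∏ i, (u i - v 0)) * dprod u (fun j : Fin k => -v j.succ) := by
    simp only [dprod]
    rw [← Finset.prod_mul_distrib]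
    apply Finset.prod_congr rfl
    intro i _
    rw [Fin.prod_univ_succ]
    ring
  have hvv : vprod (fun j : Fin (k+1) => -v j)
      = (∏ j : Fin k, (v j.succ - v 0)) * vprod (fun j : Fin k => -v j.succ) := by
    rw [vprod_tail (fun j : Fin (k+1) => -v j)]
    congr 1
    exact Finset.prod_congr rfl fun j _ => by ring
  have hs1 : (∏ j : Fin k, (v 0 - v j.succ)) = (-1:ℂ)^k * ∏ j : Fin k, (v j.succ - v 0) := by
    calc (∏ j : Fin k, (v 0 - v j.succ)) = ∏ j : Fin k, ((-1) * (v j.succ - v 0)) :=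
          Finset.prod_congr rfl fun j _ => by ring
      _ = (-1:ℂ)^k * ∏ j : Fin k, (v j.succ - v 0) := by
          rw [Finset.prod_mul_distrib, Finset.prod_const, Finset.card_univ, Fintype.card_fin]
  have hs2 : (∏ i, (u i - v 0)) = (-1:ℂ)^(N+k) * ∏ i, (v 0 - u i) := by
    calc (∏ i, (u i - v 0)) = ∏ i, ((-1) * (v 0 - u i)) :=
          Finset.prod_congr rfl fun i _ => by ring
      _ = (-1:ℂ)^(N+k) * ∏ i, (v 0 - u i) := by
          rw [Finset.prod_mul_distrib, Finset.prod_const, Finset.card_univ, Fintype.card_fin]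
  have hsign : (-1:ℂ)^(N*(k+1)) * ((-1:ℂ)^k * (-1:ℂ)^(N+k)) = (-1:ℂ)^(N*k) := by
    rw [← pow_add, ← pow_add, show N*(k+1) + (k + (N+k)) = N*k + 2*(N+k) by ring,
      pow_add, pow_mul]
    norm_num
  have hval : G (v 0) = besselLift N k l p u (Fin.tail v) := by
    rw [hG]
    show (-1:ℂ)^(N*(k+1)) * ((∏ j : Fin k, (v 0 - v j.succ)) * dprod u (fun j : Fin (k+1) => -v j)) /
      (vprod (Fin.cons (v 0) u) * vprod (fun j : Fin (k+1) => -v j)) * (Mc (v 0)).det = _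
    rw [hMc0det, hbl2, hdu, hvv, hs1, hs2, vprod_cons, ← hsign]
    field_simp
  -- continuity of the surrogate at v 0
  have hMccont : ContinuousAt Mc (v 0) := by
    apply continuousAt_pi.2
    intro i
    apply continuousAt_pi.2
    intro j
    refine Fin.cases ?_ ?_ i
    · -- first row
      have hrow : (fun z : ℂ => Mc z 0 j) = fun z =>
          if j = 0 then Complex.exp (p * (z - v 0)) else (z - v 0) * M z 0 j := by
        funext z
        show ((M z).updateRow 0 _) 0 j = _
        rw [Matrix.updateRow_self]
      rw [hrow]
      by_cases hj : j = 0
      · simp only [if_pos hj]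
        exact (Complex.continuous_exp.comp
          (continuous_const.mul (continuous_id.sub continuous_const))).continuousAt
      · simp only [if_neg hj]
        have hent : ∀ z : ℂ, M z 0 j =
            if h : (j : ℕ) < k+1 then Complex.exp (p * (z - v ⟨j, h⟩)) / (z - v ⟨j, h⟩)
            else Complex.exp (z * (l ⟨(j : ℕ) - (k+1), by have := j.isLt; omega⟩ : ℂ)) := by
          intro z
          show besselLiftMatrix N (k+1) l p (Fin.cons z u) v 0 j = _
          simp only [besselLiftMatrix, Matrix.of_apply, Fin.cons_zero]
        simp only [hent]
        by_cases hjk : (j : ℕ) < k + 1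
        · simp only [dif_pos hjk]
          have hne : v 0 - v ⟨(j:ℕ), hjk⟩ ≠ 0 := by
            refine sub_ne_zero.2 fun h => hj ?_
            have := hv h
            ext
            have h2 := congrArg Fin.val this
            simp only [Fin.val_zero, Fin.val_mk] at h2 ⊢
            omega
          exact ((continuous_id.sub continuous_const).continuousAt.mul
            (ContinuousAt.div
              (Complex.continuous_exp.comp
                (continuous_const.mul (continuous_id.sub continuous_const))).continuousAt
              (continuous_id.sub continuous_const).continuousAt hne))
        · simp only [dif_neg hjk]
          exact ((continuous_id.sub continuous_const).mul
            (Complex.continuous_exp.comp (continuous_id.mul continuous_const))).continuousAt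
    · intro i'
      have hent : (fun z : ℂ => Mc z i'.succ j) = fun _ => Mc 0 i'.succ j := by
        funext z
        show ((M z).updateRow 0 _) i'.succ j = ((M 0).updateRow 0 _) i'.succ j
        rw [Matrix.updateRow_ne (Fin.succ_ne_zero i'), Matrix.updateRow_ne (Fin.succ_ne_zero i')]
        show besselLiftMatrix N (k+1) l p (Fin.cons z u) v i'.succ j
          = besselLiftMatrix N (k+1) l p (Fin.cons 0 u) v i'.succ j
        simp only [besselLiftMatrix, Matrix.of_apply, Fin.cons_succ]
      rw [hent]
      exact continuousAt_const
  have hdetc : ContinuousAt (fun z => (Mc z).det) (v 0) :=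
    (Continuous.matrix_det continuous_id).continuousAt.comp hMccont
  have hnum : Continuous fun z : ℂ => (-1:ℂ)^(N*(k+1)) *
      ((∏ j : Fin k, (z - v j.succ)) * dprod u (fun j : Fin (k+1) => -v j)) :=
    continuous_const.mul
      ((continuous_finset_prod _ fun j _ => continuous_id.sub continuous_const).mul
        continuous_const)
  have hden : Continuous fun z : ℂ =>
      vprod (Fin.cons z u) * vprod (fun j : Fin (k+1) => -v j) := by
    simp only [vprod_cons]
    exact ((continuous_finset_prod _ fun i _ => continuous_id.sub continuous_const).mul
      continuous_const).mul continuous_const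
  have hden0 : vprod (Fin.cons (v 0) u) * vprod (fun j : Fin (k+1) => -v j) ≠ 0 := by
    apply mul_ne_zero _ hVvfull
    rw [vprod_cons]
    exact mul_ne_zero hB0 hVu
  have hGcont : ContinuousAt G (v 0) := by
    rw [hG]
    exact ((hnum.continuousAt.div hden.continuousAt hden0).mul hdetc)
  -- assembly
  rw [← hval]
  refine Tendsto.congr' ?_ (hGcont.tendsto.mono_left nhdsWithin_le_nhds)
  filter_upwards [self_mem_nhdsWithin] with z hz
  exact (key z hz).symm
end
end

section
/- Let N ≥ 1, k ≥ 1, ℓ ∈ ℝ^N, p ∈ ℂ. Let ξ = (ξ₁, …, ξ_N) ∈ ℂ^N have pairwise distinct entries with det A_ℓ(ξ) ≠ 0, and let u₁, …, u_k, v₁, …, v_k ∈ ℂ be 2k pairwise distinct complex numbers, none of which equals any ξ_l. Then 𝓑_{ℓ,p}(u₁, …, u_k, ξ₁, …, ξ_N / v₁, …, v_k) / 𝓑_ℓ(ξ) = (D(u; −v)/(Δ(u) Δ(−v))) · det( (1/(u_i − v_j)) · 𝓑_{ℓ,p}(u_i, ξ₁, …, ξ_N / v_j) / 𝓑_ℓ(ξ)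 )_{i,j=1}^k, where u = (u₁, …, u_k) and v = (v₁, …, v_k). -/
open Complex Finset Filter Topology

noncomputable section

/-- The multivariate Bessel function `𝓑_ℓ(w) = det(e^{w_i ℓ_j}) / Δ(w)`. -/
def besselFun (N : ℕ) (l : Fin N → ℝ) (w : Fin N → ℂ) : ℂ :=
  (Matrix.of fun i j : Fin N => Complex.exp (w i * (l j : ℂ))).det / vprod w

/-- The concatenation `(u₁, …, u_k, ξ₁, …, ξ_N)` as a vector indexed by `Fin (N + k)`. -/
def catUX {N k : ℕ} (u : Fin k → ℂ) (ξ : Fin N → ℂ) : Fin (N + k) → ℂ :=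
  fun i => if h : (i : ℕ) < k then u ⟨i, h⟩
    else ξ ⟨(i : ℕ) - k, by have := i.isLt; omega⟩

def sumEquiv (N k : ℕ) : Fin k ⊕ Fin N ≃ Fin (N + k) :=
  finSumFinEquiv.trans (finCongr (Nat.add_comm k N))

lemma sumEquiv_inl (N k : ℕ) (a : Fin k) : ((sumEquiv N k (Sum.inl a)) : ℕ) = a := by
  simp [_root_.sumEquiv]

lemma sumEquiv_inr (N k : ℕ) (b : Fin N) : ((sumEquiv N k (Sum.inr b)) : ℕ) = k + b := by
  simp [_root_.sumEquiv]; omega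

lemma catUX_inl {N k : ℕ} (u : Fin k → ℂ) (ξ : Fin N → ℂ) (a : Fin k) :
    catUX u ξ (sumEquiv N k (Sum.inl a)) = u a := by
  simp [catUX, sumEquiv_inl]

lemma catUX_inr {N k : ℕ} (u : Fin k → ℂ) (ξ : Fin N → ℂ) (b : Fin N) :
    catUX u ξ (sumEquiv N k (Sum.inr b)) = ξ b := by
  simp [catUX, sumEquiv_inr]

lemma prod_split {N k : ℕ} (f : Fin (N + k) → ℂ) :
    ∏ i, f i = (∏ a : Fin k, f (sumEquiv N k (Sum.inl a))) *
      ∏ b : Fin N, f (sumEquiv N k (Sum.inr b)) := by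
  rw [← (sumEquiv N k).prod_comp f, Fintype.prod_sum_type]

lemma dprod_cat {N k n : ℕ} (u : Fin k → ℂ) (ξ : Fin N → ℂ) (y : Fin n → ℂ) :
    dprod (catUX u ξ) y = dprod u y * dprod ξ y := by
  unfold dprod
  rw [prod_split (fun i => ∏ j, (catUX u ξ i + y j))]
  simp [catUX_inl, catUX_inr]

lemma vprod_cat {N k : ℕ} (u : Fin k → ℂ) (ξ : Fin N → ℂ) :
    vprod (catUX u ξ) =
      vprod u * ((∏ a : Fin k, ∏ b : Fin N, (u a - ξ b)) * vprod ξ) := by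
  unfold vprod
  rw [prod_split (fun i => ∏ j, if i < j then catUX u ξ i - catUX u ξ j else 1)]
  have h1 : ∀ a : Fin k,
      (∏ j, if sumEquiv N k (Sum.inl a) < j then catUX u ξ (sumEquiv N k (Sum.inl a)) - catUX u ξ j else 1)
      = (∏ b : Fin k, if a < b then u a - u b else 1) * ∏ b : Fin N, (u a - ξ b) := by
    intro a
    rw [prod_split (fun j => if sumEquiv N k (Sum.inl a) < j then catUX u ξ (sumEquiv N k (Sum.inl a)) - catUX u ξ j else 1)]
    congr 1
    · refine Finset.prod_congr rfl fun b _ => ?_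
      have hlt : sumEquiv N k (Sum.inl a) < sumEquiv N k (Sum.inl b) ↔ a < b := by
        simp only [Fin.lt_def, sumEquiv_inl]
      rw [catUX_inl, catUX_inl]
      by_cases h : a < b
      · rw [if_pos (hlt.mpr h), if_pos h]
      · rw [if_neg (fun hh => h (hlt.mp hh)), if_neg h]
    · refine Finset.prod_congr rfl fun b _ => ?_
      have hlt : sumEquiv N k (Sum.inl a) < sumEquiv N k (Sum.inr b) := by
        simp only [Fin.lt_def, sumEquiv_inl, sumEquiv_inr]; omega
      rw [if_pos hlt, catUX_inl, catUX_inr]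
  have h2 : ∀ b : Fin N,
      (∏ j, if sumEquiv N k (Sum.inr b) < j then catUX u ξ (sumEquiv N k (Sum.inr b)) - catUX u ξ j else 1)
      = ∏ c : Fin N, if b < c then ξ b - ξ c else 1 := by
    intro b
    rw [prod_split (fun j => if sumEquiv N k (Sum.inr b) < j then catUX u ξ (sumEquiv N k (Sum.inr b)) - catUX u ξ j else 1)]
    have : ∀ a : Fin k, ¬ (sumEquiv N k (Sum.inr b) < sumEquiv N k (Sum.inl a)) := by
      intro a
      simp only [Fin.lt_def, sumEquiv_inl, sumEquiv_inr]; omega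
    rw [Finset.prod_congr rfl (fun a _ => if_neg (this a)), Finset.prod_const_one, one_mul]
    refine Finset.prod_congr rfl fun c _ => ?_
    have hlt : sumEquiv N k (Sum.inr b) < sumEquiv N k (Sum.inr c) ↔ b < c := by
      simp only [Fin.lt_def, sumEquiv_inr]; omega
    rw [catUX_inr, catUX_inr]
    by_cases h : b < c
    · rw [if_pos (hlt.mpr h), if_pos h]
    · rw [if_neg (fun hh => h (hlt.mp hh)), if_neg h]
  rw [Finset.prod_congr rfl (fun a _ => h1 a), Finset.prod_congr rfl (fun b _ => h2 b),
    Finset.prod_mul_distrib]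
  ring

lemma vprod_fin_one (w : Fin 1 → ℂ) : vprod w = 1 := by
  simp [vprod, Fin.lt_def]

lemma lift_det_eq (N k : ℕ) (l : Fin N → ℝ) (p : ℂ) (u : Fin k → ℂ) (ξ : Fin N → ℂ)
    (v : Fin k → ℂ) :
    (besselLiftMatrix N k l p (catUX u ξ) v).det =
      (Matrix.fromBlocks
        (Matrix.of fun a b : Fin k => Complex.exp (p * (u a - v b)) / (u a - v b))
        (Matrix.of fun (a : Fin k) (b : Fin N) => Complex.exp (u a * (l b : ℂ)))
        (Matrix.of fun (a : Fin N) (b : Fin k) => Complex.exp (p * (ξ a - v b)) / (ξ a - v b))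
        (Matrix.of fun a b : Fin N => Complex.exp (ξ a * (l b : ℂ)))).det := by
  rw [← Matrix.det_submatrix_equiv_self (sumEquiv N k)]
  congr 1
  ext x y
  have hval_inl : ∀ a : Fin k, ((sumEquiv N k (Sum.inl a)) : ℕ) = a := sumEquiv_inl N k
  have hval_inr : ∀ b : Fin N, ((sumEquiv N k (Sum.inr b)) : ℕ) = k + b := sumEquiv_inr N k
  have hbl : ∀ b : Fin k, (⟨((sumEquiv N k (Sum.inl b)) : ℕ), by rw [hval_inl]; exact b.isLt⟩ : Fin k) = b := by
    intro b; apply Fin.ext; simp only [hval_inl]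
  have hbr : ∀ b : Fin N, (⟨((sumEquiv N k (Sum.inr b)) : ℕ) - k, by have := hval_inr b; have := b.isLt; omega⟩ : Fin N) = b := by
    intro b; apply Fin.ext; simp only [hval_inr]; omega
  cases x with
  | inl a =>
    cases y with
    | inl b =>
      simp only [Matrix.submatrix_apply, besselLiftMatrix, Matrix.of_apply,
        Matrix.fromBlocks_apply₁₁]
      rw [dif_pos (by rw [hval_inl]; exact b.isLt), catUX_inl, hbl]
    | inr b =>
      simp only [Matrix.submatrix_apply, besselLiftMatrix, Matrix.of_apply,
        Matrix.fromBlocks_apply₁₂]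
      rw [dif_neg (by rw [hval_inr]; omega), catUX_inl, hbr]
  | inr a =>
    cases y with
    | inl b =>
      simp only [Matrix.submatrix_apply, besselLiftMatrix, Matrix.of_apply,
        Matrix.fromBlocks_apply₂₁]
      rw [dif_pos (by rw [hval_inl]; exact b.isLt), catUX_inr, hbl]
    | inr b =>
      simp only [Matrix.submatrix_apply, besselLiftMatrix, Matrix.of_apply,
        Matrix.fromBlocks_apply₂₂]
      rw [dif_neg (by rw [hval_inr]; omega), catUX_inr, hbr]

lemma lift_det_schur (N k : ℕ) (l : Fin N → ℝ) (p : ℂ) (u : Fin k → ℂ) (ξ : Fin N → ℂ)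
    (v : Fin k → ℂ)
    (hdet : (Matrix.of fun i j : Fin N => Complex.exp (ξ i * (l j : ℂ))).det ≠ 0) :
    (besselLiftMatrix N k l p (catUX u ξ) v).det =
      (Matrix.of fun i j : Fin N => Complex.exp (ξ i * (l j : ℂ))).det *
      ((Matrix.of fun a b : Fin k => Complex.exp (p * (u a - v b)) / (u a - v b)) -
        (Matrix.of fun (a : Fin k) (b : Fin N) => Complex.exp (u a * (l b : ℂ))) *
        (Matrix.of fun i j : Fin N => Complex.exp (ξ i * (l j : ℂ)))⁻¹ *
        (Matrix.of fun (a : Fin N) (b : Fin k) =>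
          Complex.exp (p * (ξ a - v b)) / (ξ a - v b))).det := by
  haveI := (Matrix.of fun i j : Fin N =>
    Complex.exp (ξ i * (l j : ℂ))).invertibleOfIsUnitDet (isUnit_iff_ne_zero.mpr hdet)
  rw [lift_det_eq, Matrix.det_fromBlocks₂₂, Matrix.invOf_eq_nonsing_inv]

set_option maxHeartbeats 1000000 in
/-- Determinantal formula:
`𝓑_{ℓ,p}(u₁,…,u_k,ξ₁,…,ξ_N / v₁,…,v_k)/𝓑_ℓ(ξ)
  = D(u;-v)/(Δ(u)Δ(-v)) · det( (u_i - v_j)⁻¹ · 𝓑_{ℓ,p}(u_i,ξ / v_j)/𝓑_ℓ(ξ) )`. -/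
theorem statement3 (N k : ℕ) (hN : 1 ≤ N) (hk : 1 ≤ k) (l : Fin N → ℝ) (p : ℂ)
    (ξ : Fin N → ℂ) (hξ : Function.Injective ξ)
    (hdet : (Matrix.of fun i j : Fin N => Complex.exp (ξ i * (l j : ℂ))).det ≠ 0)
    (u v : Fin k → ℂ)
    (hdistinct : Function.Injective (Sum.elim u v : Fin k ⊕ Fin k → ℂ))
    (huξ : ∀ i j, u i ≠ ξ j) (hvξ : ∀ i j, v i ≠ ξ j) :
    besselLift N k l p (catUX u ξ) v / besselFun N l ξ =
      dprod u (fun j => -v j) / (vprod u * vprod fun j => -v j) *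
        (Matrix.of fun i j : Fin k =>
          (u i - v j)⁻¹ *
            (besselLift N 1 l p (catUX (fun _ : Fin 1 => u i) ξ) (fun _ : Fin 1 => v j) /
              besselFun N l ξ)).det := by
  classical
  have hu : Function.Injective u := fun a b h => by
    have := @hdistinct (Sum.inl a) (Sum.inl b) (by simpa using h)
    simpa using this
  have hv : Function.Injective v := fun a b h => by
    have := @hdistinct (Sum.inr a) (Sum.inr b) (by simpa using h)
    simpa using this
  have huv : ∀ i j, u i ≠ v j := fun i j h => by
    have := @hdistinct (Sum.inl i) (Sum.inr j) (by simpa using h)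
    simp at this
  have hVu : vprod u ≠ 0 := vprod_ne_zero hu
  have hVv : vprod (fun j => -v j) ≠ 0 :=
    vprod_ne_zero (fun a b h => hv (neg_injective h))
  have hVξ : vprod ξ ≠ 0 := vprod_ne_zero hξ
  have hQ : (∏ a : Fin k, ∏ b : Fin N, (u a - ξ b)) ≠ 0 :=
    Finset.prod_ne_zero_iff.mpr fun a _ =>
      Finset.prod_ne_zero_iff.mpr fun b _ => sub_ne_zero.mpr (huξ a b)
  set S : Matrix (Fin k) (Fin k) ℂ :=
    (Matrix.of fun a b : Fin k => Complex.exp (p * (u a - v b)) / (u a - v b)) -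
      (Matrix.of fun (a : Fin k) (b : Fin N) => Complex.exp (u a * (l b : ℂ))) *
      (Matrix.of fun i j : Fin N => Complex.exp (ξ i * (l j : ℂ)))⁻¹ *
      (Matrix.of fun (a : Fin N) (b : Fin k) =>
        Complex.exp (p * (ξ a - v b)) / (ξ a - v b)) with hS
  have hSchur : (besselLiftMatrix N k l p (catUX u ξ) v).det =
      (Matrix.of fun i j : Fin N => Complex.exp (ξ i * (l j : ℂ))).det * S.det := by
    rw [lift_det_schur N k l p u ξ v hdet, ← hS]
  have hSchur1 : ∀ i j : Fin k,
      (besselLiftMatrix N 1 l p (catUX (fun _ : Fin 1 => u i) ξ) (fun _ : Fin 1 => v j)).det =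
        (Matrix.of fun i j : Fin N => Complex.exp (ξ i * (l j : ℂ))).det * S i j := by
    intro i j
    rw [lift_det_schur N 1 l p (fun _ : Fin 1 => u i) ξ (fun _ : Fin 1 => v j) hdet]
    congr 1
    rw [hS, Matrix.det_fin_one]
    simp [Matrix.sub_apply, Matrix.mul_apply, Matrix.of_apply]
  have hK : ∀ i j : Fin k, (u i - v j)⁻¹ *
      (besselLift N 1 l p (catUX (fun _ : Fin 1 => u i) ξ) (fun _ : Fin 1 => v j) /
        besselFun N l ξ)
      = ((-1 : ℂ) ^ N * (∏ b, (u i - ξ b))⁻¹) * ((∏ b, (ξ b + -v j)) * S i j) := by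
    intro i j
    have h2 : (∏ b, (u i - ξ b)) ≠ 0 :=
      Finset.prod_ne_zero_iff.mpr fun b _ => sub_ne_zero.mpr (huξ i b)
    have h1 : u i - v j ≠ 0 := sub_ne_zero.mpr (huv i j)
    unfold besselLift besselFun
    rw [hSchur1 i j, vprod_cat, dprod_cat, vprod_fin_one, vprod_fin_one]
    have e1 : dprod (fun _ : Fin 1 => u i) (fun j_1 => -(fun _ : Fin 1 => v j) j_1)
        = u i + -v j := by simp [dprod]
    have e2 : (∏ a : Fin 1, ∏ b, ((fun _ : Fin 1 => u i) a - ξ b)) = ∏ b, (u i - ξ b) := by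
      simp
    have e3 : dprod ξ (fun j_1 => -(fun _ : Fin 1 => v j) j_1) = ∏ b, (ξ b + -v j) := by
      simp [dprod]
    rw [e1, e2, e3, Nat.mul_one]
    have h1' : u i + -v j ≠ 0 := by rwa [← sub_eq_add_neg]
    field_simp [h1, h1', h2, hVξ, hdet]
    ring
  have hdetK : (Matrix.of fun i j : Fin k =>
        (u i - v j)⁻¹ *
          (besselLift N 1 l p (catUX (fun _ : Fin 1 => u i) ξ) (fun _ : Fin 1 => v j) /
            besselFun N l ξ)).det
      = ((-1 : ℂ) ^ (N * k) * (∏ a : Fin k, ∏ b : Fin N, (u a - ξ b))⁻¹) *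
        (dprod ξ (fun j => -v j) * S.det) := by
    have hmat : (Matrix.of fun i j : Fin k =>
        (u i - v j)⁻¹ *
          (besselLift N 1 l p (catUX (fun _ : Fin 1 => u i) ξ) (fun _ : Fin 1 => v j) /
            besselFun N l ξ))
        = Matrix.of fun i j : Fin k => ((-1 : ℂ) ^ N * (∏ b, (u i - ξ b))⁻¹) *
            ((Matrix.of fun i j : Fin k => (∏ b, (ξ b + -v j)) * S i j) i j) := by
      ext i j
      simp only [Matrix.of_apply]
      rw [hK i j]
    rw [hmat, Matrix.det_mul_column, Matrix.det_mul_row]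
    have hc : (∏ i : Fin k, ((-1 : ℂ) ^ N * (∏ b, (u i - ξ b))⁻¹))
        = (-1 : ℂ) ^ (N * k) * (∏ a : Fin k, ∏ b : Fin N, (u a - ξ b))⁻¹ := by
      rw [Finset.prod_mul_distrib, Finset.prod_const, Finset.card_univ, Fintype.card_fin,
        ← pow_mul, ← Finset.prod_inv_distrib]
    have hd : (∏ j : Fin k, ∏ b : Fin N, (ξ b + -v j)) = dprod ξ (fun j => -v j) := by
      rw [dprod]; exact Finset.prod_comm
    rw [hc, hd]
  rw [hdetK]
  unfold besselLift besselFun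
  rw [hSchur, vprod_cat, dprod_cat]
  have key : ∀ du dξ ad sd vξ vu vv q : ℂ, ad ≠ 0 → vξ ≠ 0 → vu ≠ 0 → vv ≠ 0 → q ≠ 0 →
      (-1 : ℂ) ^ (N * k) * (du * dξ) / (vu * (q * vξ) * vv) * (ad * sd) / (ad / vξ)
        = du / (vu * vv) * ((-1 : ℂ) ^ (N * k) * q⁻¹ * (dξ * sd)) := by
    intro du dξ ad sd vξ vu vv q h1 h2 h3 h4 h5
    field_simp
  exact key _ _ _ _ _ _ _ _ hdet hVξ hVu hVv hQ
end
end

section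
/- Let N ≥ 1, ℓ ∈ ℝ^N, p ∈ ℂ. Let ξ = (ξ₁, …, ξ_N) ∈ ℂ^N have pairwise distinct entries with det A_ℓ(ξ) ≠ 0, and let u, v ∈ ℂ ∖ {ξ₁, …, ξ_N} with u ≠ v. Then 𝓑_{ℓ,p}(u, ξ₁, …, ξ_N / v) / 𝓑_ℓ(ξ) = (u − v) · ∏_{i=1}^N ((v − ξ_i)/(u − ξ_i)) · ( e^{p(u − v)}/(u − v) + a(u)ᵀ A_ℓ(ξ)^{−1} b(v) ), where a(u) := (e^{ℓ_1 u}, …, e^{ℓ_N u}) ∈ ℂ^N and b(v) := (e^{p(ξ_1 − v)}/(v − ξ_1), …, e^{p(ξ_N − v)}/(v − ξ_N)) ∈ ℂ^N. -/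
open Complex Finset Filter Topology

noncomputable section

def consEquiv (N : ℕ) : Fin 1 ⊕ Fin N ≃ Fin (N + 1) where
  toFun := Sum.elim (fun _ => 0) Fin.succ
  invFun i := Fin.cases (Sum.inl 0) Sum.inr i
  left_inv x := by
    rcases x with x | x
    · simp [Subsingleton.elim x 0]
    · simp
  right_inv i := by
    induction i using Fin.cases <;> simp

lemma cons_mk_succ {N : ℕ} (u : ℂ) (ξ : Fin N → ℂ) (i : Fin N) (h : (i : ℕ) + 1 < N + 1) :
    (Fin.cons u ξ : Fin (N + 1) → ℂ) (⟨(i : ℕ) + 1, h⟩ : Fin (N + 1)) = ξ i := by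
  rw [show (⟨(i : ℕ) + 1, h⟩ : Fin (N + 1)) = i.succ from rfl, Fin.cons_succ]

lemma catUX_eq_cons {N : ℕ} (u : ℂ) (ξ : Fin N → ℂ) :
    catUX (fun _ : Fin 1 => u) ξ = Fin.cons u ξ := by
  funext i
  induction i using Fin.cases with
  | zero => simp [catUX]
  | succ j => simp [catUX]

lemma vprod_cons_s4 {N : ℕ} (u : ℂ) (ξ : Fin N → ℂ) :
    vprod (Fin.cons u ξ) = (∏ j, (u - ξ j)) * vprod ξ := by
  unfold vprod
  rw [Fin.prod_univ_succ]
  congr 1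
  · rw [Fin.prod_univ_succ]
    simp [Fin.succ_pos]
  · apply Finset.prod_congr rfl
    intro i _
    rw [Fin.prod_univ_succ]
    simp [Fin.succ_lt_succ_iff]

lemma dprod_cons {N : ℕ} (u v : ℂ) (ξ : Fin N → ℂ) :
    dprod (Fin.cons u ξ) (fun _ : Fin 1 => -v) = (u - v) * ∏ i, (ξ i - v) := by
  unfold dprod
  rw [Fin.prod_univ_succ]
  simp [sub_eq_add_neg]

lemma vprod_one (v : ℂ) : vprod (fun _ : Fin 1 => -v) = 1 := by
  simp [vprod]

lemma vprod_ne_zero_s4 {N : ℕ} {ξ : Fin N → ℂ} (hξ : Function.Injective ξ) :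
    vprod ξ ≠ 0 := by
  unfold vprod
  rw [Finset.prod_ne_zero_iff]
  intro i _
  rw [Finset.prod_ne_zero_iff]
  intro j _
  split
  · exact sub_ne_zero.mpr (hξ.ne (ne_of_lt (by assumption)))
  · exact one_ne_zero

lemma lift_matrix_eq (N : ℕ) (l : Fin N → ℝ) (p u v : ℂ) (ξ : Fin N → ℂ) :
    (besselLiftMatrix N 1 l p (Fin.cons u ξ) (fun _ : Fin 1 => v)).submatrix
        (consEquiv N) (consEquiv N) =
      Matrix.fromBlocks
        (Matrix.of fun _ _ : Fin 1 => Complex.exp (p * (u - v)) / (u - v))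
        (Matrix.of fun _ j => Complex.exp (u * (l j : ℂ)))
        (Matrix.of fun i _ => Complex.exp (p * (ξ i - v)) / (ξ i - v))
        (Matrix.of fun i j => Complex.exp (ξ i * (l j : ℂ))) := by
  ext i j
  rcases i with i | i <;> rcases j with j | j <;>
    simp [besselLiftMatrix, consEquiv, Matrix.submatrix,
      Nat.lt_one_iff, Fin.succ, cons_mk_succ]

lemma det_lift (N : ℕ) (l : Fin N → ℝ) (p u v : ℂ) (ξ : Fin N → ℂ)
    (hdet : (Matrix.of fun i j : Fin N => Complex.exp (ξ i * (l j : ℂ))).det ≠ 0)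
    (hvξ : ∀ j, v ≠ ξ j) :
    (besselLiftMatrix N 1 l p (Fin.cons u ξ) (fun _ : Fin 1 => v)).det =
      (Matrix.of fun i j : Fin N => Complex.exp (ξ i * (l j : ℂ))).det *
        (Complex.exp (p * (u - v)) / (u - v) +
          dotProduct (fun i => Complex.exp ((l i : ℂ) * u))
            ((Matrix.of fun i j : Fin N => Complex.exp (ξ i * (l j : ℂ)))⁻¹.mulVec
              fun i => Complex.exp (p * (ξ i - v)) / (v - ξ i))) := by
  set A : Matrix (Fin N) (Fin N) ℂ :=
    Matrix.of fun i j : Fin N => Complex.exp (ξ i * (l j : ℂ)) with hA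
  haveI : Invertible A := A.invertibleOfIsUnitDet (isUnit_iff_ne_zero.mpr hdet)
  rw [← Matrix.det_submatrix_equiv_self (consEquiv N), lift_matrix_eq,
    Matrix.det_fromBlocks₂₂, Matrix.invOf_eq_nonsing_inv]
  congr 1
  rw [Matrix.det_fin_one]
  rw [Matrix.sub_apply, sub_eq_add_neg]
  congr 1
  have key : ((Matrix.of fun (_ : Fin 1) (j : Fin N) => Complex.exp (u * (l j : ℂ))) * A⁻¹ *
      (Matrix.of fun (i : Fin N) (_ : Fin 1) => Complex.exp (p * (ξ i - v)) / (ξ i - v)))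
      ((0 : Fin 1)) ((0 : Fin 1)) =
      ∑ k : Fin N, ∑ j : Fin N,
        Complex.exp (u * (l j : ℂ)) * A⁻¹ j k * (Complex.exp (p * (ξ k - v)) / (ξ k - v)) := by
    simp [Matrix.mul_apply, Finset.sum_mul]
  rw [key, Finset.sum_comm, neg_eq_iff_eq_neg]
  simp only [dotProduct, Matrix.mulVec, Finset.mul_sum]
  rw [← Finset.sum_neg_distrib]
  apply Finset.sum_congr rfl
  intro j _
  rw [← Finset.sum_neg_distrib]
  apply Finset.sum_congr rfl
  intro k _
  have hne : (ξ k - v) = -(v - ξ k) := by ring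
  rw [hne, div_neg]
  ring

theorem statement4' (N : ℕ) (hN : 1 ≤ N) (l : Fin N → ℝ) (p : ℂ)
    (ξ : Fin N → ℂ) (hξ : Function.Injective ξ)
    (hdet : (Matrix.of fun i j : Fin N => Complex.exp (ξ i * (l j : ℂ))).det ≠ 0)
    (u v : ℂ) (huv : u ≠ v) (huξ : ∀ j, u ≠ ξ j) (hvξ : ∀ j, v ≠ ξ j) :
    besselLift N 1 l p (catUX (fun _ : Fin 1 => u) ξ) (fun _ : Fin 1 => v) /
        besselFun N l ξ =
      (u - v) * (∏ i : Fin N, (v - ξ i) / (u - ξ i)) *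
        (Complex.exp (p * (u - v)) / (u - v) +
          dotProduct (fun i => Complex.exp ((l i : ℂ) * u))
            ((Matrix.of fun i j : Fin N => Complex.exp (ξ i * (l j : ℂ)))⁻¹.mulVec
              fun i => Complex.exp (p * (ξ i - v)) / (v - ξ i))) := by
  have huv' : u - v ≠ 0 := sub_ne_zero.mpr huv
  have hP : (∏ j, (u - ξ j)) ≠ 0 :=
    Finset.prod_ne_zero_iff.mpr fun j _ => sub_ne_zero.mpr (huξ j)
  have hΔ : vprod ξ ≠ 0 := vprod_ne_zero_s4 hξ
  have hsq : ((-1 : ℂ)) ^ N * (-1) ^ N = 1 := by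
    rw [← pow_add, ← two_mul, pow_mul]; norm_num
  have hsign : (∏ i, (ξ i - v)) = (-1 : ℂ) ^ N * ∏ i, (v - ξ i) := by
    calc (∏ i, (ξ i - v)) = ∏ i : Fin N, (-1 : ℂ) * (v - ξ i) := by
          apply Finset.prod_congr rfl; intro i _; ring
    _ = (-1 : ℂ) ^ N * ∏ i, (v - ξ i) := by
          rw [Finset.prod_mul_distrib, Finset.prod_const, Finset.card_univ,
            Fintype.card_fin]
  have hmerge : (-1 : ℂ) ^ (N * 1) *
      ((u - v) * ((-1 : ℂ) ^ N * ∏ i, (v - ξ i))) =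
      (u - v) * ∏ i, (v - ξ i) := by
    rw [Nat.mul_one]
    calc (-1 : ℂ) ^ N * ((u - v) * ((-1 : ℂ) ^ N * ∏ i, (v - ξ i)))
        = ((-1 : ℂ) ^ N * (-1) ^ N) * ((u - v) * ∏ i, (v - ξ i)) := by ring
      _ = (u - v) * ∏ i, (v - ξ i) := by rw [hsq, one_mul]
  unfold besselLift besselFun
  rw [catUX_eq_cons]
  rw [show (fun j : Fin 1 => -(fun _ : Fin 1 => v) j) = (fun _ : Fin 1 => -v) from rfl]
  rw [vprod_cons_s4, dprod_cons, vprod_one, det_lift N l p u v ξ hdet hvξ, hsign,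
    Finset.prod_div_distrib, ← mul_assoc, hmerge]
  field_simp


/-- Rank-one formula:
`𝓑_{ℓ,p}(u, ξ₁,…,ξ_N / v)/𝓑_ℓ(ξ)
 = (u-v) ∏_i (v-ξ_i)/(u-ξ_i) · ( e^{p(u-v)}/(u-v) + a(u)ᵀ A_ℓ(ξ)⁻¹ b(v) )`,
where `a(u)_i = e^{ℓ_i u}` and `b(v)_i = e^{p(ξ_i - v)}/(v - ξ_i)`. -/
theorem statement4 (N : ℕ) (hN : 1 ≤ N) (l : Fin N → ℝ) (p : ℂ)
    (ξ : Fin N → ℂ) (hξ : Function.Injective ξ)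
    (hdet : (Matrix.of fun i j : Fin N => Complex.exp (ξ i * (l j : ℂ))).det ≠ 0)
    (u v : ℂ) (huv : u ≠ v) (huξ : ∀ j, u ≠ ξ j) (hvξ : ∀ j, v ≠ ξ j) :
    besselLift N 1 l p (catUX (fun _ : Fin 1 => u) ξ) (fun _ : Fin 1 => v) /
        besselFun N l ξ =
      (u - v) * (∏ i : Fin N, (v - ξ i) / (u - ξ i)) *
        (Complex.exp (p * (u - v)) / (u - v) +
          dotProduct (fun i => Complex.exp ((l i : ℂ) * u))
            ((Matrix.of fun i j : Fin N => Complex.exp (ξ i * (l j : ℂ)))⁻¹.mulVec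
              fun i => Complex.exp (p * (ξ i - v)) / (v - ξ i))) := by
  exact statement4' N hN l p ξ hξ hdet u v huv huξ hvξ
end
end

section
/- Let N ≥ 1, ℓ₁, …, ℓ_N ∈ ℝ, α ∈ ℂ ∖ {0}, u, w ∈ ℂ, and suppose e^{ℓ_1 α}, …, e^{ℓ_N α} are pairwise distinct. Let c₀ ∈ ℂ and R > 0 satisfy: (i) |ℓ_a − c₀| < R for all a; (ii) for every a and every z with |z − c₀| ≤ R, if e^{z α} = e^{ℓ_a α} then z = ℓ_a; (iii) e^{(w − z) α} ≠ 1 for every z with |z − c₀| ≤ R. Then (1/(2πi)) ∮_{|z − c₀| = R} (α/(e^{(w − z)α} − 1)) · e^{z u} · ∏_{i=1}^N ((e^{w α} − e^{ℓ_i α})/(e^{z α} − e^{ℓ_i α})) dz = ∑_{a=1}^N e^{ℓ_a u} ∏_{i ≠ a} ((e^{w α} − e^{ℓ_i α})/(e^{ℓ_a α} − e^{ℓ_i α})), where the circle is traversed once counterclockwise. -/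
open Complex Finset Filter Topology

noncomputable section

open Metric

lemma pf_sum (N : ℕ) (hN : 1 ≤ N) (v : Fin N → ℂ) (hv : Function.Injective v)
    (x : ℂ) (hx : ∀ i, x ≠ v i) :
    ∑ a : Fin N, (x - v a)⁻¹ * ∏ i ∈ Finset.univ.erase a, (v a - v i)⁻¹
      = ∏ i : Fin N, (x - v i)⁻¹ := by
  have hpos : 0 < N := hN
  have : Nonempty (Fin N) := Fin.pos_iff_nonempty.1 hpos
  have hinj : Set.InjOn v ↑(Finset.univ : Finset (Fin N)) := fun a _ b _ h => hv h
  have h1 := Lagrange.sum_basis hinj Finset.univ_nonempty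
  have h2 := congrArg (Polynomial.eval x) h1
  rw [Polynomial.eval_finset_sum, Polynomial.eval_one] at h2
  have heval : ∀ a : Fin N, Polynomial.eval x (Lagrange.basis Finset.univ v a)
      = ∏ i ∈ Finset.univ.erase a, ((v a - v i)⁻¹ * (x - v i)) := by
    intro a
    rw [Lagrange.basis, Polynomial.eval_prod]
    exact Finset.prod_congr rfl fun i _ => by simp [Lagrange.basisDivisor]
  simp only [heval] at h2
  have hP : ∀ a : Fin N, x - v a ≠ 0 := fun a => sub_ne_zero.2 (hx a)
  have key : ∀ a : Fin N, (x - v a)⁻¹ * ∏ i ∈ Finset.univ.erase a, (v a - v i)⁻¹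
      = (∏ i ∈ Finset.univ.erase a, ((v a - v i)⁻¹ * (x - v i))) * ∏ i : Fin N, (x - v i)⁻¹ := by
    intro a
    have hPne : (∏ i ∈ Finset.univ.erase a, (x - v i)) ≠ 0 :=
      Finset.prod_ne_zero_iff.2 fun i _ => hP i
    rw [Finset.prod_mul_distrib,
      ← Finset.mul_prod_erase Finset.univ (fun i => (x - v i)⁻¹) (Finset.mem_univ a),
      show (∏ i ∈ Finset.univ.erase a, (x - v i)⁻¹) = (∏ i ∈ Finset.univ.erase a, (x - v i))⁻¹
        from Finset.prod_inv_distrib _,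
      show ∀ A P Q : ℂ, A * P * (Q * P⁻¹) = Q * A * (P * P⁻¹) from fun A P Q => by ring,
      mul_inv_cancel₀ hPne, mul_one]
  calc ∑ a : Fin N, (x - v a)⁻¹ * ∏ i ∈ Finset.univ.erase a, (v a - v i)⁻¹
      = (∑ a : Fin N, ∏ i ∈ Finset.univ.erase a, ((v a - v i)⁻¹ * (x - v i)))
          * ∏ i : Fin N, (x - v i)⁻¹ := by
        rw [Finset.sum_mul]; exact Finset.sum_congr rfl fun a _ => key a
    _ = ∏ i : Fin N, (x - v i)⁻¹ := by rw [h2, one_mul]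

/-- Residue evaluation of the contour integral
`(1/(2πi)) ∮_{|z-c₀|=R} (α/(e^{(w-z)α}-1)) e^{zu} ∏_i (e^{wα}-e^{ℓ_iα})/(e^{zα}-e^{ℓ_iα}) dz
 = ∑_a e^{ℓ_a u} ∏_{i ≠ a} (e^{wα}-e^{ℓ_iα})/(e^{ℓ_aα}-e^{ℓ_iα})`. -/
theorem statement5 (N : ℕ) (hN : 1 ≤ N) (l : Fin N → ℝ)
    (α : ℂ) (hα : α ≠ 0) (u w : ℂ)
    (hinj : Function.Injective fun a : Fin N => Complex.exp ((l a : ℂ) * α))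
    (c₀ : ℂ) (R : ℝ) (hR : 0 < R)
    (h1 : ∀ a : Fin N, ‖(l a : ℂ) - c₀‖ < R)
    (h2 : ∀ (a : Fin N) (z : ℂ), ‖z - c₀‖ ≤ R →
      Complex.exp (z * α) = Complex.exp ((l a : ℂ) * α) → z = (l a : ℂ))
    (h3 : ∀ z : ℂ, ‖z - c₀‖ ≤ R → Complex.exp ((w - z) * α) ≠ 1) :
    (1 / (2 * (Real.pi : ℂ) * Complex.I)) *
        (∮ z in C(c₀, R),
          (α / (Complex.exp ((w - z) * α) - 1)) * Complex.exp (z * u) *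
            ∏ i : Fin N,
              (Complex.exp (w * α) - Complex.exp ((l i : ℂ) * α)) /
                (Complex.exp (z * α) - Complex.exp ((l i : ℂ) * α))) =
      ∑ a : Fin N, Complex.exp ((l a : ℂ) * u) *
        ∏ i ∈ Finset.univ.erase a,
          (Complex.exp (w * α) - Complex.exp ((l i : ℂ) * α)) /
            (Complex.exp ((l a : ℂ) * α) - Complex.exp ((l i : ℂ) * α)) := by
  set E : Fin N → ℂ := fun i => Complex.exp ((l i : ℂ) * α) with hE
  set W : ℂ := Complex.exp (w * α) with hW
  -- basic nonvanishing facts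
  have hEne : ∀ i, E i ≠ 0 := fun i => Complex.exp_ne_zero _
  have hcb : ∀ z : ℂ, z ∈ closedBall c₀ R → ‖z - c₀‖ ≤ R := by
    intro z hz; rwa [Metric.mem_closedBall, Complex.dist_eq] at hz
  have hlball : ∀ a, (l a : ℂ) ∈ ball c₀ R := by
    intro a; rw [Metric.mem_ball, Complex.dist_eq]; exact h1 a
  have hsub : ∀ z : ℂ, Complex.exp ((w - z) * α) = W / Complex.exp (z * α) := by
    intro z; rw [sub_mul, Complex.exp_sub, hW]
  have hWE : ∀ a, W - E a ≠ 0 := by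
    intro a h
    apply h3 (l a) (le_of_lt (h1 a))
    rw [hsub, div_eq_one_iff_eq (Complex.exp_ne_zero _)]
    rw [sub_eq_zero] at h
    exact h
  have hEinj : ∀ a b : Fin N, E a = E b → a = b := fun a b h => hinj h
  have hEij : ∀ a : Fin N, ∀ i ∈ Finset.univ.erase a, E a - E i ≠ 0 := by
    intro a i hi
    exact sub_ne_zero.2 fun h => (Finset.mem_erase.1 hi).1 (hEinj i a h.symm)
  have hsph : ∀ z ∈ sphere c₀ R, ∀ i, Complex.exp (z * α) ≠ E i := by
    intro z hz i h
    rw [mem_sphere_iff_norm] at hz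
    have hzc : ‖z - c₀‖ = R := hz
    have := h2 i z (le_of_eq hzc) h
    rw [this] at hzc
    exact absurd hzc (ne_of_lt (h1 i))
  have hsphne : ∀ z ∈ sphere c₀ R, ∀ a, z ≠ (l a : ℂ) := by
    intro z hz a h
    rw [mem_sphere_iff_norm] at hz
    rw [h] at hz
    exact absurd hz (ne_of_lt (h1 a))
  -- the regularized denominator factor
  set φ : Fin N → ℂ → ℂ := fun a => dslope (fun z => Complex.exp (z * α)) (l a : ℂ) with hφ
  have hexp : Differentiable ℂ fun z : ℂ => Complex.exp (z * α) :=
    (differentiable_id.mul_const α).cexp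
  have hφdiff : ∀ a, Differentiable ℂ (φ a) := by
    intro a
    rw [← differentiableOn_univ]
    exact (differentiableOn_dslope (univ_mem)).2 hexp.differentiableOn
  have hderiv : ∀ a, HasDerivAt (fun z : ℂ => Complex.exp (z * α)) (E a * α) (l a : ℂ) := by
    intro a
    simpa using ((hasDerivAt_id ((l a : ℂ))).mul_const α).cexp
  have hφself : ∀ a, φ a (l a : ℂ) = E a * α := by
    intro a; rw [hφ]; simp only [dslope_same]; exact (hderiv a).deriv
  have hφval : ∀ a, ∀ z : ℂ, z ≠ (l a : ℂ) →
      φ a z = (z - (l a : ℂ))⁻¹ * (Complex.exp (z * α) - E a) := by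
    intro a z hz
    show dslope (fun z => Complex.exp (z * α)) ((l a : ℂ)) z
      = (z - (l a : ℂ))⁻¹ * (Complex.exp (z * α) - E a)
    rw [dslope_of_ne _ hz, slope_def_field, div_eq_inv_mul]
  have hφne : ∀ a, ∀ z ∈ closedBall c₀ R, φ a z ≠ 0 := by
    intro a z hz
    by_cases h : z = (l a : ℂ)
    · rw [h, hφself]; exact mul_ne_zero (hEne a) hα
    · rw [hφval a z h]
      exact mul_ne_zero (inv_ne_zero (sub_ne_zero.2 h))
        (sub_ne_zero.2 fun hh => h (h2 a z (hcb z hz) hh))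
  -- the one-pole pieces
  set C : Fin N → ℂ := fun a =>
    (∏ i, (W - E i)) * ∏ i ∈ Finset.univ.erase a, (E a - E i)⁻¹ with hC
  set ψ : Fin N → ℂ → ℂ := fun a z =>
    (α * Complex.exp (z * u) * C a) / ((Complex.exp ((w - z) * α) - 1) * φ a z) with hψ
  have hdenne : ∀ a, ∀ z ∈ closedBall c₀ R,
      (Complex.exp ((w - z) * α) - 1) * φ a z ≠ 0 := by
    intro a z hz
    exact mul_ne_zero (sub_ne_zero.2 (h3 z (hcb z hz))) (hφne a z hz)
  have hψdiff : ∀ a, DifferentiableOn ℂ (ψ a) (closedBall c₀ R) := by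
    intro a
    apply DifferentiableOn.div
    · exact (((differentiable_const α).mul
        ((differentiable_id.mul_const u).cexp)).mul_const (C a)).differentiableOn
    · exact (((((differentiable_const w).sub differentiable_id).mul_const α).cexp.sub
        (differentiable_const 1)).mul (hφdiff a)).differentiableOn
    · exact hdenne a
  -- Cauchy integral formula for each piece
  have hkey : ∀ a, (∮ z in C(c₀, R), (z - (l a : ℂ))⁻¹ • ψ a z)
      = (2 * (Real.pi : ℂ) * Complex.I) • ψ a (l a : ℂ) := by
    intro a
    exact Complex.circleIntegral_sub_inv_smul_of_differentiable_on_off_countable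
      Set.countable_empty (hlball a) (hψdiff a).continuousOn
      (fun x hx => (hψdiff a).differentiableAt
        (Metric.closedBall_mem_nhds_of_mem hx.1))
  -- value of ψ a at the pole
  have hψval : ∀ a, ψ a (l a : ℂ) = Complex.exp ((l a : ℂ) * u) *
      ∏ i ∈ Finset.univ.erase a, (W - E i) / (E a - E i) := by
    intro a
    show (α * Complex.exp ((l a : ℂ) * u) * C a)
        / ((Complex.exp ((w - (l a : ℂ)) * α) - 1) * φ a (l a : ℂ)) = _
    rw [hφself, hsub]
    have hprod : (∏ i, (W - E i)) = (W - E a) * ∏ i ∈ Finset.univ.erase a, (W - E i) :=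
      (Finset.mul_prod_erase Finset.univ _ (Finset.mem_univ a)).symm
    have hCa : C a = ((W - E a) * ∏ i ∈ Finset.univ.erase a, (W - E i))
        * (∏ i ∈ Finset.univ.erase a, (E a - E i))⁻¹ := by
      simp only [hC, hprod, Finset.prod_inv_distrib]
    rw [hCa, Finset.prod_div_distrib]
    have hPE : (∏ i ∈ Finset.univ.erase a, (E a - E i)) ≠ 0 :=
      Finset.prod_ne_zero_iff.2 (hEij a)
    have hDen : (W / E a - 1) = (W - E a) / E a := by
      rw [sub_div, div_self (hEne a)]
    rw [hDen]
    have hEa := hEne a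
    have hWEa := hWE a
    field_simp
  -- integrand equality on the circle
  have heqon : Set.EqOn
      (fun z => (α / (Complex.exp ((w - z) * α) - 1)) * Complex.exp (z * u) *
        ∏ i : Fin N, (W - E i) / (Complex.exp (z * α) - E i))
      (fun z => ∑ a : Fin N, (z - (l a : ℂ))⁻¹ • ψ a z) (sphere c₀ R) := by
    intro z hz
    simp only [smul_eq_mul]
    have hzne := hsphne z hz
    have hzE := hsph z hz
    have hterm : ∀ a : Fin N, (z - (l a : ℂ))⁻¹ * ψ a z
        = (α / (Complex.exp ((w - z) * α) - 1)) * Complex.exp (z * u) *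
          ((∏ i, (W - E i)) *
            ((Complex.exp (z * α) - E a)⁻¹ * ∏ i ∈ Finset.univ.erase a, (E a - E i)⁻¹)) := by
      intro a
      show (z - (l a : ℂ))⁻¹ * ((α * Complex.exp (z * u) * C a)
          / ((Complex.exp ((w - z) * α) - 1) * φ a z)) = _
      rw [hφval a z (hzne a), hC]
      simp only
      have hzl : z - (l a : ℂ) ≠ 0 := sub_ne_zero.2 (hzne a)
      have hzEa : Complex.exp (z * α) - E a ≠ 0 := sub_ne_zero.2 (hzE a)
      have hD : Complex.exp ((w - z) * α) - 1 ≠ 0 :=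
        sub_ne_zero.2 (h3 z (le_of_eq (mem_sphere_iff_norm.1 hz)))
      field_simp
    rw [Finset.sum_congr rfl fun a _ => hterm a]
    rw [← Finset.mul_sum, ← Finset.mul_sum]
    rw [pf_sum N hN E (fun a b h => hinj h) (Complex.exp (z * α)) hzE]
    rw [Finset.prod_inv_distrib, Finset.prod_div_distrib]
    ring
  -- integrability of each piece
  have hInt : ∀ a, CircleIntegrable (fun z => (z - (l a : ℂ))⁻¹ • ψ a z) c₀ R := by
    intro a
    apply ContinuousOn.circleIntegrable hR.le
    apply ContinuousOn.fun_smul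
    · exact (continuousOn_id.sub continuousOn_const).inv₀
        fun z hz => sub_ne_zero.2 (hsphne z hz a)
    · exact ((hψdiff a).continuousOn).mono sphere_subset_closedBall
  -- exchange integral and sum
  have hsum : (∮ z in C(c₀, R), ∑ a : Fin N, (z - (l a : ℂ))⁻¹ • ψ a z)
      = ∑ a : Fin N, ∮ z in C(c₀, R), (z - (l a : ℂ))⁻¹ • ψ a z := by
    simp only [circleIntegral, smul_sum]
    rw [intervalIntegral.integral_finset_sum]
    intro a _
    exact (hInt a).out
  -- assemble
  rw [circleIntegral.integral_congr hR.le heqon, hsum]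
  rw [Finset.sum_congr rfl fun a _ => hkey a]
  rw [← Finset.smul_sum]
  have h2pi : (2 * (Real.pi : ℂ) * Complex.I) ≠ 0 := by
    simp [Real.pi_ne_zero, Complex.I_ne_zero]
  rw [smul_eq_mul, one_div, ← mul_assoc, inv_mul_cancel₀ h2pi, one_mul]
  exact Finset.sum_congr rfl fun a _ => hψval a
end
end

section
/- Let μ be a Borel probability measure on ℝ with compact support, which is not a single point mass (i.e., μ is not a Dirac measure), and let E₋ and E₊ denote the infimum and supremum of supp μ. Define h(z) := (∫ (z − x)^{−1} dμ(x))² / (∫ (z − x)^{−2} dμ(x)) for real z ∉ [E₋, E₊] (this equals −G_μ(z)²/G_μ′(z)). Then h is strictly increasing on (E₊, ∞), strictly decreasing on (−∞, E₋), and h(z) → 1 as z → +∞ and as z → −∞. -/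
open MeasureTheory Filter Topology

noncomputable section

/-- The (topological) support of a measure on `ℝ`: the set of points all of whose open
neighborhoods have positive measure. -/
def msupp (μ : Measure ℝ) : Set ℝ :=
  {x : ℝ | ∀ U : Set ℝ, IsOpen U → x ∈ U → 0 < μ U}

namespace Statement11Aux

lemma msupp_isClosed (μ : Measure ℝ) : IsClosed (msupp μ) := by
  rw [← isOpen_compl_iff, isOpen_iff_forall_mem_open]
  intro x hx
  simp only [msupp, Set.mem_compl_iff, Set.mem_setOf_eq, not_forall] at hx
  obtain ⟨U, hUo, hxU, hU⟩ := hx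
  refine ⟨U, fun y hy hymem => ?_, hUo, hxU⟩
  exact absurd (hymem U hUo hy) hU

lemma measure_compl_msupp (μ : Measure ℝ) : μ (msupp μ)ᶜ = 0 := by
  apply measure_null_of_locally_null
  intro x hx
  simp only [msupp, Set.mem_compl_iff, Set.mem_setOf_eq, not_forall] at hx
  obtain ⟨U, hUo, hxU, hU⟩ := hx
  exact ⟨U, mem_nhdsWithin_of_mem_nhds (hUo.mem_nhds hxU), le_antisymm (not_lt.1 hU) bot_le⟩

lemma ae_mem_msupp (μ : Measure ℝ) : ∀ᵐ x ∂μ, x ∈ msupp μ :=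
  (ae_iff.2 (by exact measure_compl_msupp μ))

lemma msupp_nonempty (μ : Measure ℝ) [IsProbabilityMeasure μ] : (msupp μ).Nonempty := by
  by_contra h
  rw [Set.not_nonempty_iff_eq_empty] at h
  have := measure_compl_msupp μ
  rw [h, Set.compl_empty] at this
  simp [measure_univ] at this

lemma exists_pair (μ : Measure ℝ) [IsProbabilityMeasure μ]
    (hnotdirac : ∀ a : ℝ, μ ≠ Measure.dirac a) :
    ∃ a b, a ∈ msupp μ ∧ b ∈ msupp μ ∧ a ≠ b := by
  obtain ⟨a, ha⟩ := msupp_nonempty μ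
  by_contra h
  push_neg at h
  have hsub : msupp μ ⊆ {a} := by
    intro b hb
    by_contra hba
    exact hba (h b a hb ha |>.symm ▸ rfl)
  have hcompl : μ ({a}ᶜ) = 0 :=
    measure_mono_null (Set.compl_subset_compl.2 hsub) (measure_compl_msupp μ)
  apply hnotdirac a
  ext t ht
  rw [Measure.dirac_apply' _ ht]
  by_cases hat : a ∈ t
  · have h0 : μ tᶜ = 0 := measure_mono_null
      (fun x hx => by simp only [Set.mem_compl_iff] at hx ⊢; rintro rfl; exact hx hat) hcompl
    rw [(prob_compl_eq_zero_iff ht).1 h0]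
    simp [Set.indicator, hat]
  · have : μ t = 0 := measure_mono_null (fun x hx => by rintro rfl; exact hat hx) hcompl
    simp [Set.indicator, hat, this]

/-- Integrability of the power kernels. -/
lemma integrable_pow (μ : Measure ℝ) [IsProbabilityMeasure μ] {E z : ℝ}
    (hb : ∀ x ∈ msupp μ, x ≤ E) (hz : E < z) (n : ℕ) :
    Integrable (fun x : ℝ => ((z - x)⁻¹) ^ n) μ := by
  apply Integrable.mono' (integrable_const (((z - E)⁻¹) ^ n))
    (((measurable_const.sub measurable_id).inv).pow_const n).aestronglyMeasurable
  filter_upwards [ae_mem_msupp μ] with x hx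
  have hxE : x ≤ E := hb x hx
  have h1 : (0:ℝ) < z - x := by linarith
  have h2 : z - E ≤ z - x := by linarith
  simp only [Pi.inv_apply, Pi.sub_apply, id_eq]
  rw [Real.norm_eq_abs, abs_pow, abs_inv, abs_of_pos h1]
  exact pow_le_pow_left₀ (by positivity) (inv_anti₀ (by linarith) h2) n

/-- Positivity of the power kernel integrals. -/
lemma integral_pow_pos (μ : Measure ℝ) [IsProbabilityMeasure μ] {Em E z : ℝ}
    (hb : ∀ x ∈ msupp μ, Em ≤ x ∧ x ≤ E) (hz : E < z) (hEm : Em ≤ E) (n : ℕ)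
    (hint : Integrable (fun x : ℝ => ((z - x)⁻¹) ^ n) μ) :
    0 < ∫ x, ((z - x)⁻¹) ^ n ∂μ := by
  have hc : (0:ℝ) < ((z - Em)⁻¹) ^ n := by
    have : (0:ℝ) < z - Em := by linarith
    positivity
  calc (0:ℝ) < ((z - Em)⁻¹) ^ n := hc
    _ = ∫ _x, ((z - Em)⁻¹) ^ n ∂μ := by simp
    _ ≤ ∫ x, ((z - x)⁻¹) ^ n ∂μ := by
        apply integral_mono_ae (integrable_const _) hint
        filter_upwards [ae_mem_msupp μ] with x hx
        obtain ⟨h1, h2⟩ := hb x hx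
        have p1 : (0:ℝ) < z - x := by linarith
        have p2 : z - x ≤ z - Em := by linarith
        exact pow_le_pow_left₀ (inv_nonneg.2 (by linarith)) (inv_anti₀ p1 p2) n

/-- Differentiation under the integral sign. -/
lemma hasDerivAt_integral_pow (μ : Measure ℝ) [IsProbabilityMeasure μ] {E z : ℝ}
    (hb : ∀ x ∈ msupp μ, x ≤ E) (hz : E < z) (n : ℕ) (hn : 1 ≤ n) :
    HasDerivAt (fun w => ∫ x, ((w - x)⁻¹) ^ n ∂μ)
      (-(n : ℝ) * ∫ x, ((z - x)⁻¹) ^ (n + 1) ∂μ) z := by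
  set ε := (z - E) / 2 with hε
  have hε0 : 0 < ε := by rw [hε]; linarith
  have key := hasDerivAt_integral_of_dominated_loc_of_deriv_le (μ := μ)
    (F := fun w x => ((w - x)⁻¹) ^ n)
    (F' := fun w x => -(n : ℝ) * ((w - x)⁻¹) ^ (n + 1))
    (x₀ := z) (bound := fun _ => (n : ℝ) * (ε⁻¹) ^ (n + 1)) (s := Metric.ball z ε) (Metric.ball_mem_nhds z hε0)
    (Eventually.of_forall fun w =>
      (((measurable_const.sub measurable_id).inv).pow_const n).aestronglyMeasurable)
    (integrable_pow μ hb hz n)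
    ((((measurable_const.sub measurable_id).inv).pow_const (n+1)).const_mul
      (-(n:ℝ))).aestronglyMeasurable
    ?_ (integrable_const _) ?_
  · have k2 := key.2
    rw [integral_const_mul] at k2
    exact k2
  · filter_upwards [ae_mem_msupp μ] with x hx w hw
    have hxE : x ≤ E := hb x hx
    have hwx : ε < w - x := by
      have h1 : |w - z| < ε := by simpa [Real.dist_eq] using hw
      have := abs_lt.1 h1
      linarith
    have h0 : (0:ℝ) < w - x := lt_trans hε0 hwx
    rw [norm_mul, norm_neg, Real.norm_natCast, Real.norm_eq_abs, abs_pow, abs_inv,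
      abs_of_pos h0]
    have : (w - x)⁻¹ ≤ ε⁻¹ := inv_anti₀ hε0 hwx.le
    gcongr
  · filter_upwards [ae_mem_msupp μ] with x hx w hw
    have hxE : x ≤ E := hb x hx
    have hwx : ε < w - x := by
      have h1 : |w - z| < ε := by simpa [Real.dist_eq] using hw
      have := abs_lt.1 h1
      linarith
    have h0 : w - x ≠ 0 := by nlinarith
    have hd1 : HasDerivAt (fun w : ℝ => w - x) 1 w := (hasDerivAt_id w).sub_const x
    have hd2 : HasDerivAt (fun w : ℝ => (w - x)⁻¹) (-1 / (w - x) ^ 2) w := by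
      exact hd1.inv h0
    have hd3 := hd2.pow n
    have heq : (↑n * (w - x)⁻¹ ^ (n - 1) * (-1 / (w - x) ^ 2)) =
        -(n:ℝ) * ((w-x)⁻¹)^(n+1) := by
      rw [neg_div, one_div, ← inv_pow, show n + 1 = n - 1 + 2 from by omega, pow_add]
      ring
    exact heq ▸ hd3

/-- Strict Cauchy–Schwarz inequality. -/
lemma strict_CS (μ : Measure ℝ) [IsProbabilityMeasure μ] {E z a b : ℝ}
    (hb : ∀ x ∈ msupp μ, x ≤ E) (hz : E < z)
    (ha : a ∈ msupp μ) (hbm : b ∈ msupp μ) (hab : a ≠ b)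
    (hint : ∀ m : ℕ, Integrable (fun x : ℝ => ((z - x)⁻¹) ^ m) μ) :
    (∫ x, ((z - x)⁻¹) ^ 2 ∂μ) ^ 2 <
      (∫ x, ((z - x)⁻¹) ^ 1 ∂μ) * (∫ x, ((z - x)⁻¹) ^ 3 ∂μ) := by
  have hae := ae_mem_msupp μ
  set f : ℝ → ℝ := fun x => (z - x)⁻¹ with hf
  set g : ℝ × ℝ → ℝ := fun p => f p.1 * f p.2 * (f p.1 - f p.2) ^ 2 with hg
  have hgeq : g = fun p : ℝ × ℝ =>
      (f p.1 ^ 3 * f p.2 ^ 1 + f p.1 ^ 1 * f p.2 ^ 3) - 2 * (f p.1 ^ 2 * f p.2 ^ 2) := by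
    funext p; simp only [hg]; ring
  have hint' : ∀ m k : ℕ, Integrable (fun p : ℝ × ℝ => f p.1 ^ m * f p.2 ^ k) (μ.prod μ) := by
    intro m k
    exact (hint m).mul_prod (hint k)
  have hgint : Integrable g (μ.prod μ) := by
    rw [hgeq]
    exact ((hint' 3 1).add (hint' 1 3)).sub ((hint' 2 2).const_mul 2)
  have h1 : ∫ p, g p ∂(μ.prod μ) =
      (∫ p : ℝ × ℝ, (f p.1 ^ 3 * f p.2 ^ 1 + f p.1 ^ 1 * f p.2 ^ 3) ∂(μ.prod μ)) -
      ∫ p : ℝ × ℝ, 2 * (f p.1 ^ 2 * f p.2 ^ 2) ∂(μ.prod μ) := by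
    rw [hgeq]
    exact integral_sub ((hint' 3 1).add (hint' 1 3)) ((hint' 2 2).const_mul 2)
  have h2 : (∫ p : ℝ × ℝ, (f p.1 ^ 3 * f p.2 ^ 1 + f p.1 ^ 1 * f p.2 ^ 3) ∂(μ.prod μ)) =
      (∫ p : ℝ × ℝ, f p.1 ^ 3 * f p.2 ^ 1 ∂(μ.prod μ)) +
      ∫ p : ℝ × ℝ, f p.1 ^ 1 * f p.2 ^ 3 ∂(μ.prod μ) := integral_add (hint' 3 1) (hint' 1 3)
  have hIg : ∫ p, g p ∂(μ.prod μ) =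
      2 * ((∫ x, f x ^ 1 ∂μ) * (∫ x, f x ^ 3 ∂μ)) - 2 * (∫ x, f x ^ 2 ∂μ) ^ 2 := by
    rw [h1, h2, integral_const_mul,
      integral_prod_mul (fun x => f x ^ 3) (fun x => f x ^ 1),
      integral_prod_mul (fun x => f x ^ 1) (fun x => f x ^ 3),
      integral_prod_mul (fun x => f x ^ 2) (fun x => f x ^ 2)]
    ring
  have hs0 : μ (msupp μ)ᶜ = 0 := measure_compl_msupp μ
  have haeP : ∀ᵐ p ∂(μ.prod μ), p.1 ∈ msupp μ ∧ p.2 ∈ msupp μ := by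
    have hnull : (μ.prod μ) (((msupp μ)ᶜ ×ˢ (Set.univ : Set ℝ)) ∪
        ((Set.univ : Set ℝ) ×ˢ (msupp μ)ᶜ)) = 0 :=
      measure_union_null (by simp [Measure.prod_prod, hs0]) (by simp [Measure.prod_prod, hs0])
    rw [ae_iff]
    refine measure_mono_null (fun p hp => ?_) hnull
    simp only [Set.mem_setOf_eq, not_and_or] at hp
    rcases hp with h | h
    · exact Or.inl ⟨h, trivial⟩
    · exact Or.inr ⟨trivial, h⟩
  have hgnn : 0 ≤ᵐ[μ.prod μ] g := by
    filter_upwards [haeP] with p hp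
    have h1 : p.1 ≤ E := hb _ hp.1
    have h2 : p.2 ≤ E := hb _ hp.2
    have hp1 : 0 < f p.1 := inv_pos.2 (by linarith)
    have hp2 : 0 < f p.2 := inv_pos.2 (by linarith)
    positivity
  have hpos : 0 < ∫ p, g p ∂(μ.prod μ) := by
    rw [integral_pos_iff_support_of_nonneg_ae hgnn hgint]
    set r := min (|a - b| / 4) ((z - E) / 2) with hr
    have hr0 : 0 < r := by
      apply lt_min
      · have : a - b ≠ 0 := sub_ne_zero.2 hab
        positivity
      · linarith
    have hUV : (Metric.ball a r) ×ˢ (Metric.ball b r) ⊆ Function.support g := by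
      rintro ⟨x, y⟩ ⟨hx, hy⟩
      simp only [Metric.mem_ball, Real.dist_eq] at hx hy
      have haE : a ≤ E := hb _ ha
      have hbE : b ≤ E := hb _ hbm
      have hrle : r ≤ (z - E) / 2 := min_le_right _ _
      have hxz : x < z := by
        obtain ⟨hl, hr'⟩ := abs_lt.1 hx
        linarith
      have hyz : y < z := by
        obtain ⟨hl, hr'⟩ := abs_lt.1 hy
        linarith
      have hxy : x ≠ y := by
        intro h
        subst h
        have h3 : r ≤ |a - b| / 4 := min_le_left _ _
        have h4 : |a - b| ≤ |x - a| + |x - b| := by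
          calc |a - b| = |(a - x) + (x - b)| := by ring_nf
            _ ≤ |a - x| + |x - b| := abs_add_le _ _
            _ = |x - a| + |x - b| := by rw [abs_sub_comm]
        rw [abs_lt] at hx hy
        have hxa : |x - a| < r := abs_lt.2 ⟨by linarith [hx.1], by linarith [hx.2]⟩
        have hxb : |x - b| < r := abs_lt.2 ⟨by linarith [hy.1], by linarith [hy.2]⟩
        have h5 : |a - b| < 2 * r := by linarith
        have h6 : |a - b| ≠ 0 := fun h0 => hab (sub_eq_zero.1 (abs_eq_zero.1 h0))
        have habs : 0 < |a - b| := lt_of_le_of_ne (abs_nonneg _) (Ne.symm h6)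
        linarith
      simp only [Function.mem_support, hg]
      have hfx : 0 < f x := inv_pos.2 (by linarith)
      have hfy : 0 < f y := inv_pos.2 (by linarith)
      have hfne : f x ≠ f y := by
        rw [hf]; simp only
        intro h
        exact hxy (by have := inv_inj.1 h; linarith)
      have : (f x - f y) ^ 2 ≠ 0 := pow_ne_zero _ (sub_ne_zero.2 hfne)
      positivity
    calc (0:ENNReal) < μ (Metric.ball a r) * μ (Metric.ball b r) := by
          refine ENNReal.mul_pos ?_ ?_ <;>
          [exact (ha _ Metric.isOpen_ball (Metric.mem_ball_self hr0)).ne';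
           exact (hbm _ Metric.isOpen_ball (Metric.mem_ball_self hr0)).ne']
      _ = (μ.prod μ) ((Metric.ball a r) ×ˢ (Metric.ball b r)) := (Measure.prod_prod _ _).symm
      _ ≤ (μ.prod μ) (Function.support g) := measure_mono hUV
  rw [hIg] at hpos
  nlinarith [hpos]

/-- The right-side statement: strict monotonicity on `(E₊, ∞)` and the limit at `+∞`. -/
lemma rightSide (μ : Measure ℝ) [IsProbabilityMeasure μ]
    (hcompact : IsCompact (msupp μ))
    (hnotdirac : ∀ a : ℝ, μ ≠ Measure.dirac a) :
    StrictMonoOn (fun z => (∫ x, (z - x)⁻¹ ∂μ) ^ 2 / ∫ x, ((z - x) ^ 2)⁻¹ ∂μ)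
      (Set.Ioi (sSup (msupp μ))) ∧
    Tendsto (fun z => (∫ x, (z - x)⁻¹ ∂μ) ^ 2 / ∫ x, ((z - x) ^ 2)⁻¹ ∂μ) atTop (𝓝 1) := by
  have hne := msupp_nonempty μ
  set E := sSup (msupp μ) with hE
  set Em := sInf (msupp μ) with hEm
  have hbb : ∀ x ∈ msupp μ, Em ≤ x ∧ x ≤ E := fun x hx =>
    ⟨csInf_le hcompact.bddBelow hx, le_csSup hcompact.bddAbove hx⟩
  have hb : ∀ x ∈ msupp μ, x ≤ E := fun x hx => (hbb x hx).2
  have hEmE : Em ≤ E := by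
    obtain ⟨x, hx⟩ := hne
    obtain ⟨h1, h2⟩ := hbb x hx
    linarith
  -- rewrite the function
  have hfun : (fun z => (∫ x, (z - x)⁻¹ ∂μ) ^ 2 / ∫ x, ((z - x) ^ 2)⁻¹ ∂μ) =
      (fun z => (∫ x, ((z - x)⁻¹) ^ 1 ∂μ) ^ 2 / ∫ x, ((z - x)⁻¹) ^ 2 ∂μ) := by
    funext z
    simp only [pow_one, inv_pow]
  rw [hfun]
  set G : ℝ → ℝ := fun z => ∫ x, ((z - x)⁻¹) ^ 1 ∂μ with hG
  set H : ℝ → ℝ := fun z => ∫ x, ((z - x)⁻¹) ^ 2 ∂μ with hH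
  set K : ℝ → ℝ := fun z => ∫ x, ((z - x)⁻¹) ^ 3 ∂μ with hK
  obtain ⟨a, b, ha, hbm, hab⟩ := exists_pair μ hnotdirac
  have hGpos : ∀ z ∈ Set.Ioi E, 0 < G z := fun z hz =>
    integral_pow_pos μ hbb hz hEmE 1 (integrable_pow μ hb hz 1)
  have hHpos : ∀ z ∈ Set.Ioi E, 0 < H z := fun z hz =>
    integral_pow_pos μ hbb hz hEmE 2 (integrable_pow μ hb hz 2)
  have hCS : ∀ z ∈ Set.Ioi E, H z ^ 2 < G z * K z := fun z hz =>
    strict_CS μ hb hz ha hbm hab (integrable_pow μ hb hz)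
  have hGd : ∀ z ∈ Set.Ioi E, HasDerivAt G (-(1:ℝ) * H z) z := by
    intro z hz
    have := hasDerivAt_integral_pow μ hb hz 1 le_rfl
    simpa [hG, hH] using this
  have hHd : ∀ z ∈ Set.Ioi E, HasDerivAt H (-(2:ℝ) * K z) z := by
    intro z hz
    have := hasDerivAt_integral_pow μ hb hz 2 (by norm_num)
    simpa [hH, hK] using this
  constructor
  · -- strict monotonicity
    have hderiv : ∀ z ∈ Set.Ioi E, HasDerivAt (fun z => G z ^ 2 / H z)
        (((2 * G z ^ 1 * (-(1:ℝ) * H z)) * H z - G z ^ 2 * (-(2:ℝ) * K z)) / H z ^ 2) z :=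
      fun z hz => ((hGd z hz).pow 2).div (hHd z hz) (hHpos z hz).ne'
    apply strictMonoOn_of_deriv_pos (convex_Ioi E)
    · intro z hz
      exact ((hderiv z hz).differentiableAt.continuousAt).continuousWithinAt
    · intro z hz
      rw [interior_Ioi] at hz
      rw [(hderiv z hz).deriv]
      have h1 := hGpos z hz
      have h2 := hHpos z hz
      have h3 := hCS z hz
      have hnum : 0 < (2 * G z ^ 1 * (-(1:ℝ) * H z)) * H z - G z ^ 2 * (-(2:ℝ) * K z) := by
        nlinarith
      positivity
  · -- tendsto at top
    have hae := ae_mem_msupp μ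
    simp only [hG, hH, pow_one]
    set C : ℝ := 1 + |Em| + |E| with hC
    have hC1 : (1:ℝ) ≤ C := by
      have := abs_nonneg Em; have := abs_nonneg E; simp only [hC]; linarith
    have hbound : ∀ᶠ z in atTop, ∀ᵐ x ∂μ, ‖z * (z - x)⁻¹‖ ≤ C := by
      filter_upwards [eventually_ge_atTop (max (E + 1) 1)] with z hzl
      have hz1 : (1:ℝ) ≤ z := le_trans (le_max_right _ _) hzl
      have hzE : E + 1 ≤ z := le_trans (le_max_left _ _) hzl
      filter_upwards [hae] with x hx
      obtain ⟨h1, h2⟩ := hbb x hx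
      have hzx : (1:ℝ) ≤ z - x := by linarith
      have hxabs : |x| ≤ |Em| + |E| := by
        rw [abs_le]; constructor
        · have := neg_abs_le Em; have := abs_nonneg E; linarith
        · have := le_abs_self E; have := abs_nonneg Em; linarith
      have hposzx : (0:ℝ) < z - x := by linarith
      rw [Real.norm_eq_abs, abs_mul, abs_inv, abs_of_pos hposzx,
        abs_of_pos (by linarith : (0:ℝ) < z)]
      have key : z * (z - x)⁻¹ = 1 + x * (z - x)⁻¹ := by
        field_simp
        ring
      rw [key]
      have hax : x * (z - x)⁻¹ ≤ |x| * (z - x)⁻¹ :=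
        mul_le_mul_of_nonneg_right (le_abs_self x) (by positivity)
      have h3 : |x| * (z - x)⁻¹ ≤ |x| := by
        calc |x| * (z - x)⁻¹ ≤ |x| * 1 := by
              apply mul_le_mul_of_nonneg_left _ (abs_nonneg x)
              rw [inv_le_one_iff₀]; right; exact hzx
          _ = |x| := mul_one _
      simp only [hC]; linarith
    have hlim : ∀ x : ℝ, Tendsto (fun z : ℝ => z * (z - x)⁻¹) atTop (𝓝 1) := by
      intro x
      have l1 : Tendsto (fun z : ℝ => 1 - x * z⁻¹) atTop (𝓝 1) := by
        have := (tendsto_inv_atTop_zero (𝕜 := ℝ)).const_mul x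
        simpa using tendsto_const_nhds.sub this
      have l2 := l1.inv₀ (by norm_num : (1:ℝ) ≠ 0)
      rw [inv_one] at l2
      apply l2.congr'
      filter_upwards [eventually_gt_atTop (max 0 x)] with z hz
      have hz0 : z ≠ 0 := (lt_of_le_of_lt (le_max_left _ _) hz).ne'
      have hzx : z - x ≠ 0 := by
        have := lt_of_le_of_lt (le_max_right _ _) hz; intro h; apply this.ne'; linarith
      field_simp
    have hmeas : ∀ z : ℝ, AEStronglyMeasurable (fun x => z * (z - x)⁻¹) μ :=
      fun z => ((measurable_const.sub measurable_id).inv.const_mul z).aestronglyMeasurable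
    have t1 : Tendsto (fun z => ∫ x, z * (z - x)⁻¹ ∂μ) atTop (𝓝 1) := by
      have := tendsto_integral_filter_of_dominated_convergence (μ := μ)
        (F := fun z x => z * (z - x)⁻¹) (f := fun _ => (1:ℝ)) (fun _ => C)
        (Eventually.of_forall hmeas) hbound (integrable_const C)
        (Eventually.of_forall fun x => hlim x)
      simpa using this
    have hbound2 : ∀ᶠ z in atTop, ∀ᵐ x ∂μ, ‖(z * (z - x)⁻¹) ^ 2‖ ≤ C ^ 2 := by
      filter_upwards [hbound] with z hz
      filter_upwards [hz] with x hx
      rw [norm_pow]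
      exact pow_le_pow_left₀ (norm_nonneg _) hx 2
    have t2 : Tendsto (fun z => ∫ x, (z * (z - x)⁻¹) ^ 2 ∂μ) atTop (𝓝 1) := by
      have := tendsto_integral_filter_of_dominated_convergence (μ := μ)
        (F := fun z x => (z * (z - x)⁻¹) ^ 2) (f := fun _ => (1:ℝ)) (fun _ => C ^ 2)
        (Eventually.of_forall fun z => (hmeas z).pow 2) hbound2 (integrable_const _)
        (Eventually.of_forall fun x => by simpa using (hlim x).pow 2)
      simpa using this
    have tfinal : Tendsto
        (fun z => (∫ x, z * (z - x)⁻¹ ∂μ) ^ 2 / ∫ x, (z * (z - x)⁻¹) ^ 2 ∂μ)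
        atTop (𝓝 1) := by
      have := (t1.pow 2).div t2 (by norm_num : (1:ℝ) ≠ 0)
      rw [one_pow, div_one] at this
      exact this
    apply tfinal.congr'
    filter_upwards [eventually_gt_atTop (0:ℝ)] with z hz0
    have e1 : (∫ x, z * (z - x)⁻¹ ∂μ) = z * ∫ x, (z - x)⁻¹ ∂μ := integral_const_mul _ _
    have e2 : (∫ x, (z * (z - x)⁻¹) ^ 2 ∂μ) = z ^ 2 * ∫ x, ((z - x)⁻¹) ^ 2 ∂μ := by
      simp_rw [mul_pow]
      exact integral_const_mul _ _
    rw [e1, e2, mul_pow, mul_div_mul_left _ _ (by positivity : (z:ℝ) ^ 2 ≠ 0)]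

end Statement11Aux

open Statement11Aux in
/-- For a compactly supported probability measure `μ` on `ℝ` which is
not a point mass, the function `h(z) = (∫ (z-x)⁻¹ dμ)² / ∫ (z-x)⁻² dμ` is strictly
increasing on `(E₊, ∞)`, strictly decreasing on `(−∞, E₋)`, and tends to `1` at `±∞`. -/
theorem statement11 (μ : Measure ℝ) [IsProbabilityMeasure μ]
    (hcompact : IsCompact (msupp μ))
    (hnotdirac : ∀ a : ℝ, μ ≠ Measure.dirac a) :
    let h : ℝ → ℝ := fun z => (∫ x, (z - x)⁻¹ ∂μ) ^ 2 / ∫ x, ((z - x) ^ 2)⁻¹ ∂μ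
    StrictMonoOn h (Set.Ioi (sSup (msupp μ))) ∧
      StrictAntiOn h (Set.Iio (sInf (msupp μ))) ∧
      Tendsto h atTop (𝓝 1) ∧ Tendsto h atBot (𝓝 1) := by
  intro h
  -- the reflected measure
  set ν : Measure ℝ := μ.map (fun x : ℝ => -x) with hν
  haveI : IsProbabilityMeasure ν := Measure.isProbabilityMeasure_map measurable_neg.aemeasurable
  have hmsuppν : msupp ν = (fun x : ℝ => -x) '' (msupp μ) := by
    ext x
    constructor
    · intro hx
      refine ⟨-x, ?_, by ring⟩
      intro U hUo hxU
      have h1 : ν ((fun y : ℝ => -y) ⁻¹' U) = μ U := by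
        rw [hν, Measure.map_apply measurable_neg (hUo.measurableSet.preimage measurable_neg)]
        congr 1
        ext y
        simp
      have h2 := hx ((fun y : ℝ => -y) ⁻¹' U) (hUo.preimage continuous_neg) (by simpa using hxU)
      rwa [h1] at h2
    · rintro ⟨y, hy, rfl⟩
      intro U hUo hxU
      rw [hν, Measure.map_apply measurable_neg hUo.measurableSet]
      exact hy _ (hUo.preimage continuous_neg) (by simpa using hxU)
  have hmsuppν' : msupp ν = -(msupp μ) := by
    rw [hmsuppν]
    ext x
    simp only [Set.mem_image, Set.mem_neg]
    constructor
    · rintro ⟨y, hy, rfl⟩; simpa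
    · intro hx; exact ⟨-x, hx, by ring⟩
  have hcompactν : IsCompact (msupp ν) := by
    rw [hmsuppν]
    exact hcompact.image continuous_neg
  have hnotdiracν : ∀ a : ℝ, ν ≠ Measure.dirac a := by
    intro a hcontra
    apply hnotdirac (-a)
    have : ν.map (fun x : ℝ => -x) = μ := by
      rw [hν, Measure.map_map measurable_neg measurable_neg]
      simp
    rw [← this, hcontra, Measure.map_dirac' (f := fun x : ℝ => -x) measurable_neg]
  have hsSupν : sSup (msupp ν) = -sInf (msupp μ) := by
    rw [hmsuppν', Real.sInf_def]
    ring
  -- the reflection identity for h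
  have hrefl : ∀ z : ℝ, (∫ x, (z - x)⁻¹ ∂ν) ^ 2 / (∫ x, ((z - x) ^ 2)⁻¹ ∂ν) = h (-z) := by
    intro z
    have e1 : ∫ x, (z - x)⁻¹ ∂ν = ∫ x, (z + x)⁻¹ ∂μ := by
      rw [hν, integral_map (φ := fun x : ℝ => -x) measurable_neg.aemeasurable
        (f := fun x : ℝ => (z - x)⁻¹)
        ((measurable_const.sub measurable_id).inv).aestronglyMeasurable]
      congr 1
      ext x
      ring_nf
    have e2 : ∫ x, ((z - x) ^ 2)⁻¹ ∂ν = ∫ x, ((z + x) ^ 2)⁻¹ ∂μ := by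
      rw [hν, integral_map (φ := fun x : ℝ => -x) measurable_neg.aemeasurable
        (f := fun x : ℝ => ((z - x) ^ 2)⁻¹)
        (((measurable_const.sub measurable_id).pow_const 2).inv).aestronglyMeasurable]
      congr 1
      ext x
      ring_nf
    have e3 : ∫ x, (-z - x)⁻¹ ∂μ = -∫ x, (z + x)⁻¹ ∂μ := by
      rw [← integral_neg]
      congr 1
      ext x
      rw [show -z - x = -(z + x) by ring, inv_neg]
    have e4 : ∫ x, ((-z - x) ^ 2)⁻¹ ∂μ = ∫ x, ((z + x) ^ 2)⁻¹ ∂μ := by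
      congr 1
      ext x
      rw [show (-z - x) ^ 2 = (z + x) ^ 2 by ring]
    simp only [h, e1, e2, e3, e4, neg_sq]
  obtain ⟨hmono, htop⟩ := rightSide μ hcompact hnotdirac
  obtain ⟨hmonoν, htopν⟩ := rightSide ν hcompactν hnotdiracν
  refine ⟨hmono, ?_, htop, ?_⟩
  · -- strict anti on (−∞, E₋)
    intro p hp q hq hpq
    have hp' : -p ∈ Set.Ioi (sSup (msupp ν)) := by
      rw [hsSupν]
      simp only [Set.mem_Ioi]
      simp only [Set.mem_Iio] at hp
      linarith
    have hq' : -q ∈ Set.Ioi (sSup (msupp ν)) := by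
      rw [hsSupν]
      simp only [Set.mem_Ioi]
      simp only [Set.mem_Iio] at hq
      linarith
    have h1 := hrefl (-q)
    have h2 := hrefl (-p)
    rw [neg_neg] at h1 h2
    have := hmonoν hq' hp' (by linarith)
    simp only [] at this
    rwa [h1, h2] at this
  · -- tendsto at bot
    have hcomp := htopν.comp tendsto_neg_atBot_atTop
    apply hcomp.congr
    intro z
    simp only [Function.comp]
    rw [hrefl, neg_neg]
end
end

section
/- Let μ be a Borel probability measure on ℝ with compact support, let z₀ ∈ ℂ ∖ supp μ with u := G_μ(z₀) ≠ 0, and let c ∈ ℝ. Define Φ_{μ,u}(z) := Re(z·u) − ∫ log|z − x| dμ(x) − log|u| for z ∈ ℂ ∖ supp μ. Then the set {z ∈ ℂ ∖ supp μ : Φ_{μ,u}(z) > c} has exactly one unbounded connected component (that is, it has an unbounded connected component, and any two unbounded connected components of it coincide), and likewise the set {z ∈ ℂ ∖ supp μ : Φ_{μ,u}(z) < c} has exactly one unbounded connected component. -/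
open MeasureTheory Filter Topology Set

noncomputable section

namespace Stmt12Aux

lemma log_le_affine {x t : ℝ} (hx : 0 < x) (ht : 0 < t) :
    Real.log x ≤ t * x - Real.log t - 1 := by
  have h := Real.log_le_sub_one_of_pos (mul_pos ht hx)
  rw [Real.log_mul (ne_of_gt ht) (ne_of_gt hx)] at h
  linarith

lemma ae_mem_msupp (μ : Measure ℝ) : ∀ᵐ x ∂μ, x ∈ msupp μ := by
  have hmain : μ ((msupp μ)ᶜ) = 0 := by
    set S : Set (Set ℝ) := {U | IsOpen U ∧ μ U = 0} with hS
    obtain ⟨T, hTc, hTS, hTU⟩ :=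
      TopologicalSpace.isOpen_sUnion_countable S (fun s hs => hs.1)
    have hsub : (msupp μ)ᶜ ⊆ ⋃₀ S := by
      intro x hx
      simp only [msupp, mem_compl_iff, mem_setOf_eq, not_forall] at hx
      obtain ⟨U, hU, hxU, hpos⟩ := hx
      exact ⟨U, ⟨hU, le_antisymm (not_lt.1 hpos) (zero_le)⟩, hxU⟩
    have h0 : μ (⋃₀ S) = 0 := by
      rw [← hTU]
      exact (measure_sUnion_null_iff hTc).2 (fun s hs => (hTS hs).2)
    exact measure_mono_null hsub h0
  rw [ae_iff]
  exact measure_mono_null (fun x hx => hx) hmain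

lemma meas_log (μ : Measure ℝ) (z : ℂ) :
    AEStronglyMeasurable (fun x : ℝ => Real.log (‖(z - (x : ℂ))‖)) μ := by
  apply Measurable.aestronglyMeasurable
  exact Real.measurable_log.comp
    (continuous_norm.measurable.comp (measurable_const.sub Complex.measurable_ofReal))

lemma L_bounds (μ : Measure ℝ) [IsProbabilityMeasure μ]
    (hae : ∀ᵐ x ∂μ, x ∈ msupp μ) (z : ℂ) {d D : ℝ} (hd : 0 < d)
    (hbd : ∀ x ∈ msupp μ, d ≤ ‖(z - (x : ℂ))‖ ∧ ‖(z - (x : ℂ))‖ ≤ D) :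
    Integrable (fun x : ℝ => Real.log (‖(z - (x : ℂ))‖)) μ ∧
      Real.log d ≤ (∫ x : ℝ, Real.log (‖(z - (x : ℂ))‖) ∂μ) ∧
      (∫ x : ℝ, Real.log (‖(z - (x : ℂ))‖) ∂μ) ≤ Real.log D := by
  have hptlo : ∀ᵐ (x : ℝ) ∂μ, Real.log d ≤ Real.log (‖(z - (x : ℂ))‖) := by
    filter_upwards [hae] with x hx
    exact Real.log_le_log hd (hbd x hx).1
  have hpthi : ∀ᵐ (x : ℝ) ∂μ, Real.log (‖(z - (x : ℂ))‖) ≤ Real.log D := by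
    filter_upwards [hae] with x hx
    exact Real.log_le_log (lt_of_lt_of_le hd (hbd x hx).1) (hbd x hx).2
  have hint : Integrable (fun x : ℝ => Real.log (‖(z - (x : ℂ))‖)) μ := by
    apply Integrable.mono' (integrable_const (max |Real.log d| |Real.log D|)) (meas_log μ z)
    filter_upwards [hptlo, hpthi] with x h1 h2
    exact abs_le_max_abs_abs h1 h2
  refine ⟨hint, ?_, ?_⟩
  · have := integral_mono_ae (integrable_const (Real.log d)) hint hptlo
    simpa [integral_const] using this
  · have := integral_mono_ae hint (integrable_const (Real.log D)) hpthi
    simpa [integral_const] using this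

lemma L_inc (μ : Measure ℝ) [IsProbabilityMeasure μ]
    (hae : ∀ᵐ x ∂μ, x ∈ msupp μ) (p q : ℂ) {d : ℝ} (hd : 0 < d)
    (hq : ∀ x ∈ msupp μ, d ≤ ‖(q - (x : ℂ))‖)
    (hp : ∀ x ∈ msupp μ, 0 < ‖(p - (x : ℂ))‖)
    (hIp : Integrable (fun x : ℝ => Real.log (‖(p - (x : ℂ))‖)) μ)
    (hIq : Integrable (fun x : ℝ => Real.log (‖(q - (x : ℂ))‖)) μ) :
    (∫ x : ℝ, Real.log (‖(p - (x : ℂ))‖) ∂μ) -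
      (∫ x : ℝ, Real.log (‖(q - (x : ℂ))‖) ∂μ) ≤ ‖(p - q)‖ / d := by
  rw [← integral_sub hIp hIq]
  have hpt : ∀ᵐ (x : ℝ) ∂μ, Real.log (‖(p - (x : ℂ))‖) -
      Real.log (‖(q - (x : ℂ))‖) ≤ ‖(p - q)‖ / d := by
    filter_upwards [hae] with x hx
    set A := ‖(p - (x : ℂ))‖ with hA
    set B := ‖(q - (x : ℂ))‖ with hB
    have hApos : 0 < A := hp x hx
    have hBd : d ≤ B := hq x hx
    have hBpos : 0 < B := lt_of_lt_of_le hd hBd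
    rcases le_or_gt A B with hAB | hAB
    · have h1 : Real.log A - Real.log B ≤ 0 := by
        have := Real.log_le_log hApos hAB
        linarith
      have h2 : (0:ℝ) ≤ ‖(p - q)‖ / d :=
        div_nonneg (norm_nonneg _) (le_of_lt hd)
      linarith
    · have h1 : Real.log A - Real.log B = Real.log (A / B) :=
        (Real.log_div (ne_of_gt hApos) (ne_of_gt hBpos)).symm
      have h2 : Real.log (A / B) ≤ A / B - 1 :=
        Real.log_le_sub_one_of_pos (div_pos hApos hBpos)
      have h3 : A / B - 1 = (A - B) / B := by field_simp
      have htri : A - B ≤ ‖(p - q)‖ := by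
        have : A ≤ ‖(p - q)‖ + B := by
          calc A = ‖((p - q) + (q - (x:ℂ)))‖ := by rw [hA, sub_add_sub_cancel]
          _ ≤ ‖(p - q)‖ + B := norm_add_le _ _
        linarith
      have h4 : (A - B) / B ≤ ‖(p - q)‖ / d :=
        div_le_div₀ (norm_nonneg _) htri hd hBd
      linarith
  have := integral_mono_ae (hIp.sub hIq) (integrable_const (‖(p - q)‖ / d)) hpt
  simpa [integral_const] using this


lemma exists_R (a M c1 c2 : ℝ) (ha : 0 < a) (hM : 0 < M) :
    ∃ R : ℝ, M + 1 ≤ R ∧ 2/a ≤ R - M ∧ M + 2/a ≤ R/2 ∧ c1 ≤ Real.log (R - M) ∧ c2 ≤ R := by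
  have h2a : (0:ℝ) < 2/a := div_pos two_pos ha
  have hexp := Real.add_one_le_exp (|c1| + |c2| + M + 2*(2/a))
  refine ⟨M + Real.exp (|c1| + |c2| + M + 2*(2/a)), ?_, ?_, ?_, ?_, ?_⟩
  · linarith [abs_nonneg c1, abs_nonneg c2]
  · linarith [abs_nonneg c1, abs_nonneg c2]
  · linarith [abs_nonneg c1, abs_nonneg c2]
  · rw [add_sub_cancel_left, Real.log_exp]
    linarith [le_abs_self c1, abs_nonneg c2]
  · linarith [abs_nonneg c1, le_abs_self c2]

lemma exists_K (a M c : ℝ) (ha : 0 < a) (hM : 0 < M) :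
    ∃ K : ℝ, (M+1)*a ≤ K ∧ 0 < K ∧
      ∀ ρ : ℝ, K ≤ ρ → c < ρ - Real.log (2*ρ/a + M) - Real.log a := by
  have h4a : (0:ℝ) < a/4 := by linarith
  have hMa : (0:ℝ) ≤ M*a := mul_nonneg hM.le ha.le
  have hM1a : (0:ℝ) < (M+1)*a := mul_pos (by linarith) ha
  refine ⟨2*(|c| + |Real.log a| + M*a + |Real.log (a/4)| + 1) + (M+1)*a, ?_, ?_, ?_⟩
  · linarith [abs_nonneg c, abs_nonneg (Real.log a), abs_nonneg (Real.log (a/4))]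
  · linarith [abs_nonneg c, abs_nonneg (Real.log a), abs_nonneg (Real.log (a/4))]
  · intro ρ hρ
    have hρpos : 0 < ρ := by
      have : (0:ℝ) < 2*(|c| + |Real.log a| + M*a + |Real.log (a/4)| + 1) + (M+1)*a := by
        linarith [abs_nonneg c, abs_nonneg (Real.log a), abs_nonneg (Real.log (a/4))]
      linarith
    have harg : 0 < 2*ρ/a + M := by
      have : 0 < 2*ρ/a := div_pos (by linarith) ha
      linarith
    have hlog := log_le_affine harg h4a
    have hid : (a/4)*(2*ρ/a + M) = ρ/2 + a*M/4 := by field_simp; ring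
    linarith [le_abs_self c, le_abs_self (Real.log a), neg_abs_le (Real.log (a/4)), hlog, hid]

end Stmt12Aux

set_option maxHeartbeats 2000000 in
/-- For a compactly supported probability measure `μ` on `ℝ`,
`z₀ ∉ supp μ` (viewed in `ℂ`) with `u := G_μ(z₀) ≠ 0`, and any `c ∈ ℝ`, each of the sets
`{z ∉ supp μ : Φ(z) > c}` and `{z ∉ supp μ : Φ(z) < c}` has exactly one unbounded
connected component, where `Φ(z) = Re(z u) − ∫ log|z − x| dμ(x) − log|u|`. -/
theorem statement12 (μ : Measure ℝ) [IsProbabilityMeasure μ]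
    (hcompact : IsCompact (msupp μ))
    (z₀ : ℂ) (hz₀ : z₀ ∉ (fun x : ℝ => (x : ℂ)) '' msupp μ)
    (hu : (∫ x, (z₀ - (x : ℂ))⁻¹ ∂μ) ≠ 0) (c : ℝ) :
    let u : ℂ := ∫ x, (z₀ - (x : ℂ))⁻¹ ∂μ
    let Φ : ℂ → ℝ := fun z =>
      (z * u).re - (∫ x, Real.log (‖(z - (x : ℂ))‖) ∂μ) -
        Real.log (‖u‖)
    let Sp : Set ℂ := {z | z ∉ (fun x : ℝ => (x : ℂ)) '' msupp μ ∧ c < Φ z}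
    let Sm : Set ℂ := {z | z ∉ (fun x : ℝ => (x : ℂ)) '' msupp μ ∧ Φ z < c}
    ((∃ z ∈ Sp, ¬ Bornology.IsBounded (connectedComponentIn Sp z)) ∧
        ∀ z ∈ Sp, ∀ w ∈ Sp,
          ¬ Bornology.IsBounded (connectedComponentIn Sp z) →
          ¬ Bornology.IsBounded (connectedComponentIn Sp w) →
          connectedComponentIn Sp z = connectedComponentIn Sp w) ∧
      ((∃ z ∈ Sm, ¬ Bornology.IsBounded (connectedComponentIn Sm z)) ∧
        ∀ z ∈ Sm, ∀ w ∈ Sm,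
          ¬ Bornology.IsBounded (connectedComponentIn Sm z) →
          ¬ Bornology.IsBounded (connectedComponentIn Sm w) →
          connectedComponentIn Sm z = connectedComponentIn Sm w) := by
  intro u Φ Sp Sm
  have hu' : u ≠ 0 := hu
  obtain ⟨a, ha, ha_def⟩ : ∃ a : ℝ, 0 < a ∧ ‖u‖ = a :=
    ⟨‖u‖, norm_pos_iff.mpr hu', rfl⟩
  obtain ⟨M, hM1, hMx⟩ : ∃ M : ℝ, 1 ≤ M ∧ ∀ x ∈ msupp μ, |x| ≤ M := by
    obtain ⟨r0, hr0⟩ := hcompact.isBounded.subset_closedBall (0 : ℝ)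
    refine ⟨max r0 1, le_max_right _ _, fun x hx => ?_⟩
    have h := hr0 hx
    rw [Metric.mem_closedBall, Real.dist_eq, sub_zero] at h
    exact le_trans h (le_max_left _ _)
  have hMpos : (0:ℝ) < M := lt_of_lt_of_le one_pos hM1
  have hae := Stmt12Aux.ae_mem_msupp μ
  obtain ⟨w, hwu, habs_w, hu_eq⟩ : ∃ w : ℂ, w * u = ((a:ℝ):ℂ) ∧ ‖w‖ = 1 ∧
      u = ((a:ℝ):ℂ) * (starRingEnd ℂ) w := by
    have haC : ((a:ℝ):ℂ) ≠ 0 := by exact_mod_cast ne_of_gt ha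
    refine ⟨(starRingEnd ℂ) u / ((a:ℝ):ℂ), ?_, ?_, ?_⟩
    · rw [div_mul_eq_mul_div, Complex.conj_mul']
      rw [show ‖u‖ = a by rw [ha_def]]
      rw [sq, mul_div_assoc, div_self haC, mul_one]
    · rw [norm_div, Complex.norm_conj, Complex.norm_real, Real.norm_eq_abs, ha_def, abs_of_pos ha,
        div_self (ne_of_gt ha)]
    · rw [map_div₀, Complex.conj_conj, Complex.conj_ofReal]
      field_simp
  have hre_p : ∀ (z : ℂ) (s : ℝ), ((z + (s:ℝ) * w) * u).re = (z*u).re + s * a := by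
    intro z s
    rw [add_mul, mul_assoc, hwu, ← Complex.ofReal_mul]
    simp
  have hre_m : ∀ (z : ℂ) (s : ℝ), ((z - (s:ℝ) * w) * u).re = (z*u).re - s * a := by
    intro z s
    rw [sub_mul, mul_assoc, hwu, ← Complex.ofReal_mul]
    simp
  have habs_sw : ∀ s : ℝ, 0 ≤ s → ‖((s:ℝ) * w : ℂ)‖ = s := by
    intro s hs
    rw [norm_mul, habs_w, Complex.norm_real, Real.norm_eq_abs, abs_of_nonneg hs, mul_one]
  -- distance bounds
  have hdist1 : ∀ (z : ℂ) (x : ℝ), |x| ≤ M →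
      ‖z‖ - M ≤ ‖(z - (x:ℝ))‖ ∧
      ‖(z - (x:ℝ))‖ ≤ ‖z‖ + M := by
    intro z x hx
    have hax : ‖((x:ℝ) : ℂ)‖ = |x| := Complex.norm_real x
    constructor
    · have h := norm_sub_norm_le z ((x:ℝ) : ℂ)
      rw [hax] at h
      linarith
    · have h := norm_sub_le z ((x:ℝ) : ℂ)
      rw [hax] at h
      linarith
  have hdist2 : ∀ (z : ℂ) (x : ℝ), |x| ≤ M →
      ((z*u).re - M*a)/a ≤ ‖(z - (x:ℝ))‖ ∧
      (-(z*u).re - M*a)/a ≤ ‖(z - (x:ℝ))‖ := by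
    intro z x hx
    have h1 : |((z - (x:ℝ)) * u).re| ≤ ‖(z - (x:ℝ))‖ * a := by
      calc |((z - (x:ℝ)) * u).re| ≤ ‖((z - (x:ℝ)) * u)‖ := Complex.abs_re_le_norm _
      _ = ‖(z - (x:ℝ))‖ * a := by rw [norm_mul, ha_def]
    have h2 : ((z - (x:ℝ)) * u).re = (z*u).re - x * u.re := by
      rw [sub_mul, Complex.sub_re, Complex.re_ofReal_mul]
    have h3 : |x * u.re| ≤ M * a := by
      rw [abs_mul]
      refine mul_le_mul hx ?_ (abs_nonneg _) (le_of_lt hMpos)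
      rw [← ha_def]
      exact Complex.abs_re_le_norm u
    have h1' := abs_le.1 h1
    have h3' := abs_le.1 h3
    constructor <;> rw [div_le_iff₀ ha] <;> linarith [h1'.1, h1'.2, h3'.1, h3'.2]
  have hnotim : ∀ q : ℂ, (∀ x ∈ msupp μ, 0 < ‖(q - (x:ℝ))‖) →
      q ∉ (fun x : ℝ => (x : ℂ)) '' msupp μ := by
    rintro q h ⟨x, hx, rfl⟩
    simpa using h x hx
  have hΦ : ∀ z : ℂ, Φ z = (z*u).re -
      (∫ x : ℝ, Real.log (‖(z - (x:ℝ))‖) ∂μ) - Real.log a := by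
    intro z
    have h0 : Φ z = (z*u).re -
        (∫ x : ℝ, Real.log (‖(z - (x:ℝ))‖) ∂μ) - Real.log (‖u‖) := rfl
    rw [h0, ha_def]
  have hSp : ∀ z : ℂ, z ∈ Sp ↔
      (z ∉ (fun x : ℝ => (x : ℂ)) '' msupp μ ∧ c < Φ z) := fun z => Iff.rfl
  have hSm : ∀ z : ℂ, z ∈ Sm ↔
      (z ∉ (fun x : ℝ => (x : ℂ)) '' msupp μ ∧ Φ z < c) := fun z => Iff.rfl
  clear_value u Φ Sp Sm
  -- constants
  obtain ⟨R, hMR, hRMa, hR2, hRlog, hR4pre⟩ := Stmt12Aux.exists_R a M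
    ((M+1)*a + |c| + |Real.log a|)
    ((4/a)*(|c| + |Real.log a| + |Real.log (a/4)| + 1) + M) ha hMpos
  have hRMpos : (0:ℝ) < R - M := by
    have : (0:ℝ) < 2/a := div_pos two_pos ha
    linarith
  obtain ⟨K, hKMa, hKpos, hKB⟩ := Stmt12Aux.exists_K a M c ha hMpos
  obtain ⟨K', hK'Ma, hK'pos, hK'c⟩ : ∃ K' : ℝ, (M+1)*a ≤ K' ∧ 0 < K' ∧
      -K' - Real.log a < c := by
    have hM1a : (0:ℝ) < (M+1)*a := mul_pos (by linarith) ha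
    refine ⟨(M+1)*a + |c| + |Real.log a| + 1, le_add_of_le_of_nonneg (le_add_of_le_of_nonneg
      (le_add_of_le_of_nonneg le_rfl (abs_nonneg _)) (abs_nonneg _)) one_pos.le, ?_, ?_⟩
    · linarith [abs_nonneg c, abs_nonneg (Real.log a)]
    · linarith [le_abs_self c, neg_abs_le c, neg_abs_le (Real.log a), le_abs_self (Real.log a)]
  have hR4 : ∀ r : ℝ, R ≤ r → c + Real.log a + Real.log (r + M) ≤ a * r / 2 := by
    intro r hr
    have hrpos : 0 < r + M := by linarith
    have h4a : (0:ℝ) < a/4 := by linarith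
    have hlog := Stmt12Aux.log_le_affine hrpos h4a
    have hid : (a/4)*(r + M) = a*r/4 + a*M/4 := by ring
    have hmul := mul_le_mul_of_nonneg_left (le_trans hR4pre hr) (le_of_lt h4a)
    have hmul2 : (|c| + |Real.log a| + |Real.log (a/4)| + 1) + a*M/4 ≤ (a/4)*r := by
      rw [← show (a/4)*((4/a)*(|c| + |Real.log a| + |Real.log (a/4)| + 1) + M)
          = (|c| + |Real.log a| + |Real.log (a/4)| + 1) + a*M/4 by field_simp]
      exact hmul
    linarith [le_abs_self c, le_abs_self (Real.log a), neg_abs_le (Real.log (a/4)), hlog, hid]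
  -- integrability and two-sided bounds at far points
  have hLbounds_far : ∀ z : ℂ, R ≤ ‖z‖ →
      Integrable (fun x : ℝ => Real.log (‖(z - (x:ℝ))‖)) μ ∧
      Real.log (‖z‖ - M) ≤ (∫ x : ℝ, Real.log (‖(z-(x:ℝ))‖) ∂μ) ∧
      (∫ x : ℝ, Real.log (‖(z-(x:ℝ))‖) ∂μ) ≤ Real.log (‖z‖ + M) := by
    intro z hz
    have hd : 0 < ‖z‖ - M := by linarith
    exact Stmt12Aux.L_bounds μ hae z hd (fun x hx => hdist1 z x (hMx x hx))
  have hlogzM : ∀ z : ℂ, R ≤ ‖z‖ →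
      (M+1)*a + |c| + |Real.log a| ≤ Real.log (‖z‖ - M) := by
    intro z hz
    exact le_trans hRlog (Real.log_le_log hRMpos (by linarith))
  have hSp_re : ∀ z : ℂ, z ∈ Sp → R ≤ ‖z‖ → (M+1)*a ≤ (z*u).re := by
    intro z hz hzR
    obtain ⟨-, hc⟩ := (hSp z).1 hz
    rw [hΦ z] at hc
    obtain ⟨-, hlo, -⟩ := hLbounds_far z hzR
    have hE := hlogzM z hzR
    linarith [le_abs_self c, neg_abs_le c, le_abs_self (Real.log a), neg_abs_le (Real.log a)]
  have hSm_re : ∀ z : ℂ, z ∈ Sm → R ≤ ‖z‖ → (z*u).re ≤ a * ‖z‖ / 2 := by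
    intro z hz hzR
    obtain ⟨-, hc⟩ := (hSm z).1 hz
    rw [hΦ z] at hc
    obtain ⟨-, -, hhi⟩ := hLbounds_far z hzR
    have h := hR4 (‖z‖) hzR
    linarith
  -- ray path lemma for Sp
  have hP1 : ∀ z₁ : ℂ, z₁ ∈ Sp → R ≤ ‖z₁‖ → ∀ s : ℝ, 0 ≤ s →
      z₁ + (s:ℝ) * w ∈ Sp := by
    intro z₁ hz₁ hzR s hs
    obtain ⟨hz₁n, hc⟩ := (hSp z₁).1 hz₁
    rw [hΦ z₁] at hc
    obtain ⟨hI₁, hlo₁, hhi₁⟩ := hLbounds_far z₁ hzR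
    have hre₁ : (M+1)*a ≤ (z₁*u).re := hSp_re z₁ hz₁ hzR
    have hqre : ((z₁ + (s:ℝ)*w)*u).re = (z₁*u).re + s*a := hre_p z₁ s
    have hq_dlo : ∀ x ∈ msupp μ, 1 + s ≤ ‖((z₁ + (s:ℝ)*w) - (x:ℝ))‖ := by
      intro x hx
      have h := (hdist2 (z₁ + (s:ℝ)*w) x (hMx x hx)).1
      have h2 : (1 + s)*a ≤ ((z₁ + (s:ℝ)*w)*u).re - M*a := by
        rw [hqre]
        have : (0:ℝ) ≤ s*a := mul_nonneg hs ha.le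
        nlinarith [hre₁]
      rw [div_le_iff₀ ha] at h
      exact le_of_mul_le_mul_right (le_trans h2 h) ha
    have hq_dpos : ∀ x ∈ msupp μ, 0 < ‖((z₁ + (s:ℝ)*w) - (x:ℝ))‖ :=
      fun x hx => lt_of_lt_of_le (by linarith) (hq_dlo x hx)
    obtain ⟨hIq, -, -⟩ := Stmt12Aux.L_bounds μ hae (z₁ + (s:ℝ)*w) one_pos
      (fun x hx => ⟨by linarith [hq_dlo x hx], (hdist1 (z₁ + (s:ℝ)*w) x (hMx x hx)).2⟩)
    have hX2a : 2/a ≤ ‖z₁‖ - M := by linarith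
    have hXpos : 0 < ‖z₁‖ - M := by
      have : (0:ℝ) < 2/a := div_pos two_pos ha
      linarith
    have hinc := Stmt12Aux.L_inc μ hae (z₁ + (s:ℝ)*w) z₁ hXpos
      (fun x hx => (hdist1 z₁ x (hMx x hx)).1) hq_dpos hIq hI₁
    have habsqz : ‖((z₁ + (s:ℝ)*w) - z₁)‖ = s := by
      rw [add_sub_cancel_left]
      exact habs_sw s hs
    rw [habsqz] at hinc
    have hfrac : s / (‖z₁‖ - M) ≤ s*(a/2) := by
      have hkey : (2:ℝ) ≤ a*(‖z₁‖ - M) := by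
        have h := mul_le_mul_of_nonneg_left hX2a ha.le
        rwa [show a*(2/a) = 2 by field_simp] at h
      have h1 : 1/(‖z₁‖ - M) ≤ a/2 := by
        rw [div_le_div_iff₀ hXpos (by norm_num : (0:ℝ) < 2)]
        linarith
      have h2 : s/(‖z₁‖ - M) = s*(1/(‖z₁‖ - M)) := by ring
      rw [h2]
      exact mul_le_mul_of_nonneg_left h1 hs
    refine (hSp _).2 ⟨hnotim _ hq_dpos, ?_⟩
    rw [hΦ _, hqre]
    have hsa : (0:ℝ) ≤ s*a := mul_nonneg hs ha.le
    nlinarith [hinc, hfrac, hc]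
  -- ray path lemma for Sm
  have hP2 : ∀ z₁ : ℂ, z₁ ∈ Sm → R ≤ ‖z₁‖ → ∀ s : ℝ, 0 ≤ s →
      z₁ - (s:ℝ) * w ∈ Sm := by
    intro z₁ hz₁ hzR s hs
    obtain ⟨hz₁n, hc⟩ := (hSm z₁).1 hz₁
    rw [hΦ z₁] at hc
    obtain ⟨hI₁, hlo₁, hhi₁⟩ := hLbounds_far z₁ hzR
    have hre₁ : (z₁*u).re ≤ a * ‖z₁‖ / 2 := hSm_re z₁ hz₁ hzR
    have hqre : ((z₁ - (s:ℝ)*w)*u).re = (z₁*u).re - s*a := hre_m z₁ s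
    -- square computation : |z₁ - s w| ≥ |z₁|/2
    have hw_comp : w.re^2 + w.im^2 = 1 := by
      have h := Complex.sq_norm w
      rw [habs_w, Complex.normSq_apply] at h
      linear_combination -h
    have hz_comp : z₁.re^2 + z₁.im^2 = (‖z₁‖)^2 := by
      have h := Complex.sq_norm z₁
      rw [Complex.normSq_apply] at h
      linear_combination -h
    have ht : a*(z₁.re*w.re + z₁.im*w.im) = (z₁*u).re := by
      rw [hu_eq, show z₁ * (((a:ℝ):ℂ) * (starRingEnd ℂ) w)
        = ((a:ℝ):ℂ) * (z₁ * (starRingEnd ℂ) w) by ring]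
      rw [Complex.re_ofReal_mul, Complex.mul_re, Complex.conj_re, Complex.conj_im]
      ring
    have htle : z₁.re*w.re + z₁.im*w.im ≤ ‖z₁‖/2 := by
      have h1 : a*(z₁.re*w.re + z₁.im*w.im) ≤ a*(‖z₁‖/2) := by
        rw [ht]
        linarith [hre₁]
      exact le_of_mul_le_mul_left h1 ha
    have hq_re_c : (z₁ - (s:ℝ)*w).re = z₁.re - s*w.re := by
      simp [Complex.sub_re, Complex.mul_re, Complex.ofReal_re, Complex.ofReal_im]
    have hq_im_c : (z₁ - (s:ℝ)*w).im = z₁.im - s*w.im := by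
      simp [Complex.sub_im, Complex.mul_im, Complex.ofReal_re, Complex.ofReal_im]
    have hq_abs2 : (‖(z₁ - (s:ℝ)*w)‖)^2
        = (‖z₁‖)^2 - 2*s*(z₁.re*w.re + z₁.im*w.im) + s^2 := by
      rw [Complex.sq_norm, Complex.normSq_apply, hq_re_c, hq_im_c]
      linear_combination hz_comp + s^2 * hw_comp
    have hqr2 : ‖z₁‖/2 ≤ ‖(z₁ - (s:ℝ)*w)‖ := by
      have hrpos : (0:ℝ) < ‖z₁‖ := by
        have : (0:ℝ) < 2/a := div_pos two_pos ha
        linarith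
      by_contra hcon
      push_neg at hcon
      have h1 : (‖(z₁ - (s:ℝ)*w)‖)^2 < (‖z₁‖/2)^2 :=
        pow_lt_pow_left₀ hcon (norm_nonneg _) two_ne_zero
      have h2 := mul_le_mul_of_nonneg_left htle hs
      linarith [hq_abs2, h2, sq_nonneg (s - ‖z₁‖/2), mul_pos hrpos hrpos]
    have hq_dlo : ∀ x ∈ msupp μ, 2/a ≤ ‖((z₁ - (s:ℝ)*w) - (x:ℝ))‖ := by
      intro x hx
      have h := (hdist1 (z₁ - (s:ℝ)*w) x (hMx x hx)).1
      linarith [hqr2, hR2]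
    have h2apos : (0:ℝ) < 2/a := div_pos two_pos ha
    have hq_dpos : ∀ x ∈ msupp μ, 0 < ‖((z₁ - (s:ℝ)*w) - (x:ℝ))‖ :=
      fun x hx => lt_of_lt_of_le h2apos (hq_dlo x hx)
    obtain ⟨hIq, -, -⟩ := Stmt12Aux.L_bounds μ hae (z₁ - (s:ℝ)*w) h2apos
      (fun x hx => ⟨hq_dlo x hx, (hdist1 (z₁ - (s:ℝ)*w) x (hMx x hx)).2⟩)
    have hinc := Stmt12Aux.L_inc μ hae z₁ (z₁ - (s:ℝ)*w) h2apos hq_dlo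
      (fun x hx => by
        have h := (hdist1 z₁ x (hMx x hx)).1
        linarith [hRMpos])
      hI₁ hIq
    have habsqz : ‖(z₁ - (z₁ - (s:ℝ)*w))‖ = s := by
      rw [sub_sub_cancel]
      exact habs_sw s hs
    rw [habsqz, div_div_eq_mul_div] at hinc
    refine (hSm _).2 ⟨hnotim _ hq_dpos, ?_⟩
    rw [hΦ _, hqre]
    have hsa : (0:ℝ) ≤ s*a := mul_nonneg hs ha.le
    linarith [hinc, hc]
  -- the convex cone inside Sp
  have hCpSp : {z : ℂ | K ≤ (z*u).re ∧ a * ‖z‖ ≤ 2*(z*u).re} ⊆ Sp := by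
    intro z hz
    simp only [Set.mem_setOf_eq] at hz
    obtain ⟨hzK, hza⟩ := hz
    have hρpos : 0 < (z*u).re := lt_of_lt_of_le hKpos hzK
    have habsz : ‖z‖ ≤ 2*(z*u).re/a := by
      rw [le_div_iff₀ ha]
      linarith [hza]
    have hdlo : ∀ x ∈ msupp μ, 1 ≤ ‖(z - (x:ℝ))‖ := by
      intro x hx
      have h := (hdist2 z x (hMx x hx)).1
      have h2 : (1:ℝ)*a ≤ (z*u).re - M*a := by linarith [hKMa, hzK]
      rw [div_le_iff₀ ha] at h
      exact le_of_mul_le_mul_right (le_trans h2 h) ha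
    have hdpos : ∀ x ∈ msupp μ, 0 < ‖(z - (x:ℝ))‖ :=
      fun x hx => lt_of_lt_of_le one_pos (hdlo x hx)
    have hdhi : ∀ x ∈ msupp μ, ‖(z - (x:ℝ))‖ ≤ 2*(z*u).re/a + M := by
      intro x hx
      have h := (hdist1 z x (hMx x hx)).2
      linarith [habsz]
    obtain ⟨hint, hlo, hhi⟩ := Stmt12Aux.L_bounds μ hae z one_pos
      (fun x hx => ⟨hdlo x hx, hdhi x hx⟩)
    refine (hSp z).2 ⟨hnotim z hdpos, ?_⟩
    rw [hΦ z]
    have hKB' := hKB ((z*u).re) hzK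
    rw [Real.log_one] at hlo
    linarith [hhi]
  -- the half-plane inside Sm
  have hHmSm : {z : ℂ | (z*u).re ≤ -K'} ⊆ Sm := by
    intro z hz
    simp only [Set.mem_setOf_eq] at hz
    have habsz : M + 1 ≤ ‖z‖ := by
      have h2 : -(z*u).re ≤ ‖z‖ * a := by
        calc -(z*u).re ≤ |(z*u).re| := neg_le_abs _
        _ ≤ ‖(z*u)‖ := Complex.abs_re_le_norm _
        _ = ‖z‖ * a := by rw [norm_mul, ha_def]
      exact le_of_mul_le_mul_right
        (by linarith [hK'Ma] : (M+1)*a ≤ ‖z‖ * a) ha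
    have hdlo : ∀ x ∈ msupp μ, 1 ≤ ‖(z - (x:ℝ))‖ := by
      intro x hx
      have h := (hdist2 z x (hMx x hx)).2
      rw [div_le_iff₀ ha] at h
      have h2 : (1:ℝ)*a ≤ -(z*u).re - M*a := by linarith [hK'Ma]
      exact le_of_mul_le_mul_right (le_trans h2 h) ha
    have hd1 : (0:ℝ) < ‖z‖ - M := by linarith
    obtain ⟨hint, hlo, hhi⟩ := Stmt12Aux.L_bounds μ hae z hd1
      (fun x hx => hdist1 z x (hMx x hx))
    refine (hSm z).2 ⟨hnotim z (fun x hx => lt_of_lt_of_le one_pos (hdlo x hx)), ?_⟩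
    rw [hΦ z]
    have hL0 : 0 ≤ Real.log (‖z‖ - M) := Real.log_nonneg (by linarith)
    linarith [hK'c]
  -- convexity
  have hre_smul : ∀ (p : ℝ) (z : ℂ), ((p • z)*u).re = p*(z*u).re := by
    intro p z
    rw [Complex.real_smul, mul_assoc, Complex.re_ofReal_mul]
  have habs_smul : ∀ (p : ℝ) (z : ℂ), 0 ≤ p → ‖(p • z)‖ = p * ‖z‖ := by
    intro p z hp
    rw [Complex.real_smul, norm_mul, Complex.norm_real, Real.norm_eq_abs, abs_of_nonneg hp]
  have hCp_conv : Convex ℝ {z : ℂ | K ≤ (z*u).re ∧ a * ‖z‖ ≤ 2*(z*u).re} := by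
    intro z hz y hy p q' hp hq' hpq
    simp only [Set.mem_setOf_eq] at hz hy ⊢
    obtain ⟨hz1, hz2⟩ := hz
    obtain ⟨hy1, hy2⟩ := hy
    have hre' : ((p • z + q' • y)*u).re = p*(z*u).re + q'*(y*u).re := by
      rw [add_mul, Complex.add_re, hre_smul, hre_smul]
    have hK1 : p*K + q'*K = K := by rw [← add_mul, hpq, one_mul]
    constructor
    · rw [hre']
      have e1 := mul_le_mul_of_nonneg_left hz1 hp
      have e2 := mul_le_mul_of_nonneg_left hy1 hq'
      linarith
    · have htri : ‖(p • z + q' • y)‖ ≤ p*‖z‖ + q'*‖y‖ := by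
        calc ‖(p • z + q' • y)‖
            ≤ ‖(p • z)‖ + ‖(q' • y)‖ := norm_add_le _ _
        _ = p*‖z‖ + q'*‖y‖ := by
            rw [habs_smul p z hp, habs_smul q' y hq']
      rw [hre']
      have e1 := mul_le_mul_of_nonneg_left hz2 hp
      have e2 := mul_le_mul_of_nonneg_left hy2 hq'
      have e3 := mul_le_mul_of_nonneg_left htri ha.le
      nlinarith [e1, e2, e3]
  have hHm_conv : Convex ℝ {z : ℂ | (z*u).re ≤ -K'} := by
    intro z hz y hy p q' hp hq' hpq
    simp only [Set.mem_setOf_eq] at hz hy ⊢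
    rw [add_mul, Complex.add_re, hre_smul, hre_smul]
    have e1 := mul_le_mul_of_nonneg_left hz hp
    have e2 := mul_le_mul_of_nonneg_left hy hq'
    have hK1 : p*(-K') + q'*(-K') = -K' := by rw [← add_mul, hpq, one_mul]
    linarith
  -- rays are preconnected
  have hray_connP : ∀ z₁ : ℂ, IsPreconnected ((fun s : ℝ => z₁ + (s:ℝ) * w) '' Set.Ici 0) :=
    fun z₁ => isPreconnected_Ici.image _
      ((continuous_const.add (Complex.continuous_ofReal.mul continuous_const)).continuousOn)
  have hray_connM : ∀ z₁ : ℂ, IsPreconnected ((fun s : ℝ => z₁ - (s:ℝ) * w) '' Set.Ici 0) :=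
    fun z₁ => isPreconnected_Ici.image _
      ((continuous_const.sub (Complex.continuous_ofReal.mul continuous_const)).continuousOn)
  -- unbounded components contain far points
  have hfar : ∀ (S : Set ℂ) (z : ℂ), ¬ Bornology.IsBounded (connectedComponentIn S z) →
      ∃ z₁ ∈ connectedComponentIn S z, R ≤ ‖z₁‖ := by
    intro S z hb
    by_contra h
    push_neg at h
    apply hb
    rw [isBounded_iff_forall_norm_le]
    refine ⟨R, fun x hx => ?_⟩
    exact le_of_lt (h x hx)
  -- explicit points of the cone / half-plane
  have htwCp : ∀ t : ℝ, 2*K/a + 1 ≤ t →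
      ((t:ℝ) * w : ℂ) ∈ {z : ℂ | K ≤ (z*u).re ∧ a * ‖z‖ ≤ 2*(z*u).re} := by
    intro t ht
    have h2Ka : (0:ℝ) ≤ 2*K/a := div_nonneg (by linarith) ha.le
    have ht0 : (0:ℝ) ≤ t := le_trans (by linarith) ht
    have hre : (((t:ℝ) * w : ℂ)*u).re = t*a := by
      rw [mul_assoc, hwu, ← Complex.ofReal_mul]
      simp
    have hta : 2*K + a ≤ t*a := by
      have h := mul_le_mul_of_nonneg_right ht ha.le
      rwa [show (2*K/a + 1)*a = 2*K + a by field_simp] at h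
    simp only [Set.mem_setOf_eq]
    constructor
    · rw [hre]; linarith
    · rw [hre, habs_sw t ht0]
      linarith [mul_nonneg ht0 ha.le]
  have htwHm : ∀ t : ℝ, K'/a ≤ t → ((0:ℂ) - (t:ℝ) * w) ∈ {z : ℂ | (z*u).re ≤ -K'} := by
    intro t ht
    simp only [Set.mem_setOf_eq]
    rw [hre_m 0 t]
    simp only [zero_mul, Complex.zero_re]
    have h := mul_le_mul_of_nonneg_right ht ha.le
    rw [div_mul_cancel₀ _ (ne_of_gt ha)] at h
    linarith
  -- linking far points of Sp to the base point of the cone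
  have hlinkP : ∀ z₁ : ℂ, z₁ ∈ Sp → R ≤ ‖z₁‖ →
      ((2*K/a + 1 : ℝ) * w : ℂ) ∈ connectedComponentIn Sp z₁ := by
    intro z₁ hz₁ hzR
    have hS₁0 : (0:ℝ) ≤ ‖z₁‖ + K/a :=
      add_nonneg (norm_nonneg _) (le_of_lt (div_pos hKpos ha))
    have hraySp : (fun s : ℝ => z₁ + (s:ℝ) * w) '' Set.Ici 0 ⊆ Sp := by
      rintro _ ⟨s, hs, rfl⟩
      exact hP1 z₁ hz₁ hzR s hs
    have hz₁mem : z₁ ∈ (fun s : ℝ => z₁ + (s:ℝ) * w) '' Set.Ici 0 :=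
      ⟨0, Set.self_mem_Ici, by simp⟩
    have hraycc := (hray_connP z₁).subset_connectedComponentIn hz₁mem hraySp
    have hp₁cc : z₁ + ((‖z₁‖ + K/a : ℝ):ℝ) * w ∈ connectedComponentIn Sp z₁ :=
      hraycc ⟨‖z₁‖ + K/a, Set.mem_Ici.2 hS₁0, rfl⟩
    have hre₁ := hSp_re z₁ hz₁ hzR
    have hp₁Cp : z₁ + ((‖z₁‖ + K/a : ℝ):ℝ) * w ∈
        {z : ℂ | K ≤ (z*u).re ∧ a * ‖z‖ ≤ 2*(z*u).re} := by
      have hqre := hre_p z₁ (‖z₁‖ + K/a)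
      have hidS : (‖z₁‖ + K/a)*a = ‖z₁‖ * a + K := by field_simp
      have habs0 : (0:ℝ) ≤ ‖z₁‖ * a := mul_nonneg (norm_nonneg _) ha.le
      have hM1a : (0:ℝ) ≤ (M+1)*a := le_of_lt (mul_pos (by linarith) ha)
      simp only [Set.mem_setOf_eq]
      constructor
      · rw [hqre]; linarith
      · have htri : ‖(z₁ + ((‖z₁‖ + K/a : ℝ):ℝ) * w)‖ ≤
            ‖z₁‖ + (‖z₁‖ + K/a) := by
          calc ‖(z₁ + ((‖z₁‖ + K/a : ℝ):ℝ) * w)‖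
              ≤ ‖z₁‖ + ‖(((‖z₁‖ + K/a : ℝ):ℝ) * w : ℂ)‖ :=
                norm_add_le _ _
          _ = ‖z₁‖ + (‖z₁‖ + K/a) := by rw [habs_sw _ hS₁0]
        rw [hqre]
        have e3 := mul_le_mul_of_nonneg_left htri ha.le
        linarith [e3, hidS]
    rw [connectedComponentIn_eq hp₁cc]
    exact (hCp_conv.isPreconnected.subset_connectedComponentIn hp₁Cp hCpSp)
      (htwCp _ le_rfl)
  -- linking far points of Sm to the base point of the half-plane
  have hlinkM : ∀ z₁ : ℂ, z₁ ∈ Sm → R ≤ ‖z₁‖ →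
      ((0:ℂ) - (K'/a : ℝ) * w) ∈ connectedComponentIn Sm z₁ := by
    intro z₁ hz₁ hzR
    have hS₁0 : (0:ℝ) ≤ (|(z₁*u).re| + K')/a :=
      div_nonneg (add_nonneg (abs_nonneg _) hK'pos.le) ha.le
    have hraySm : (fun s : ℝ => z₁ - (s:ℝ) * w) '' Set.Ici 0 ⊆ Sm := by
      rintro _ ⟨s, hs, rfl⟩
      exact hP2 z₁ hz₁ hzR s hs
    have hz₁mem : z₁ ∈ (fun s : ℝ => z₁ - (s:ℝ) * w) '' Set.Ici 0 :=
      ⟨0, Set.self_mem_Ici, by simp⟩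
    have hraycc := (hray_connM z₁).subset_connectedComponentIn hz₁mem hraySm
    have hp₁cc : z₁ - (((|(z₁*u).re| + K')/a : ℝ):ℝ) * w ∈ connectedComponentIn Sm z₁ :=
      hraycc ⟨(|(z₁*u).re| + K')/a, Set.mem_Ici.2 hS₁0, rfl⟩
    have hp₁Hm : z₁ - (((|(z₁*u).re| + K')/a : ℝ):ℝ) * w ∈ {z : ℂ | (z*u).re ≤ -K'} := by
      simp only [Set.mem_setOf_eq]
      rw [hre_m]
      have hidS : ((|(z₁*u).re| + K')/a)*a = |(z₁*u).re| + K' :=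
        div_mul_cancel₀ _ (ne_of_gt ha)
      linarith [le_abs_self ((z₁*u).re), hidS]
    rw [connectedComponentIn_eq hp₁cc]
    exact (hHm_conv.isPreconnected.subset_connectedComponentIn hp₁Hm hHmSm)
      (htwHm _ le_rfl)
  -- unboundedness of the distinguished components
  have hCp_unb : ¬ Bornology.IsBounded
      (connectedComponentIn Sp ((2*K/a + 1 : ℝ) * w : ℂ)) := by
    intro hb
    obtain ⟨C, hC⟩ := isBounded_iff_forall_norm_le.1 hb
    have h2Ka : (0:ℝ) ≤ 2*K/a := div_nonneg (by linarith) ha.le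
    have hsub := hCp_conv.isPreconnected.subset_connectedComponentIn
      (htwCp _ le_rfl) hCpSp
    have hmem := hsub (htwCp (max (2*K/a + 1) (C + 1)) (le_max_left _ _))
    have hnorm := hC _ hmem
    rw [
      habs_sw _ (le_trans (by linarith) (le_max_left (2*K/a + 1) (C + 1)))] at hnorm
    linarith [le_max_right (2*K/a + 1) (C + 1)]
  have hHm_unb : ¬ Bornology.IsBounded
      (connectedComponentIn Sm ((0:ℂ) - (K'/a : ℝ) * w)) := by
    intro hb
    obtain ⟨C, hC⟩ := isBounded_iff_forall_norm_le.1 hb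
    have hKa0 : (0:ℝ) ≤ K'/a := div_nonneg hK'pos.le ha.le
    have hsub := hHm_conv.isPreconnected.subset_connectedComponentIn
      (htwHm _ le_rfl) hHmSm
    have hmem := hsub (htwHm (max (K'/a) (C + 1)) (le_max_left _ _))
    have hnorm := hC _ hmem
    have habs0 : ‖((0:ℂ) - ((max (K'/a) (C + 1) : ℝ):ℝ) * w)‖
        = max (K'/a) (C + 1) := by
      rw [zero_sub, norm_neg]
      exact habs_sw _ (le_trans hKa0 (le_max_left _ _))
    rw [habs0] at hnorm
    linarith [le_max_right (K'/a) (C + 1)]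
  -- final assembly
  refine ⟨⟨⟨((2*K/a + 1 : ℝ) * w : ℂ), hCpSp (htwCp _ le_rfl), hCp_unb⟩, ?_⟩,
    ⟨⟨((0:ℂ) - (K'/a : ℝ) * w), hHmSm (htwHm _ le_rfl), hHm_unb⟩, ?_⟩⟩
  · intro z hz w' hw' hbz hbw
    obtain ⟨z₁, hz₁cc, hz₁R⟩ := hfar Sp z hbz
    obtain ⟨w₁, hw₁cc, hw₁R⟩ := hfar Sp w' hbw
    have l1 := hlinkP z₁ (connectedComponentIn_subset _ _ hz₁cc) hz₁R
    have l2 := hlinkP w₁ (connectedComponentIn_subset _ _ hw₁cc) hw₁R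
    rw [connectedComponentIn_eq hz₁cc, connectedComponentIn_eq l1,
      connectedComponentIn_eq hw₁cc, connectedComponentIn_eq l2]
  · intro z hz w' hw' hbz hbw
    obtain ⟨z₁, hz₁cc, hz₁R⟩ := hfar Sm z hbz
    obtain ⟨w₁, hw₁cc, hw₁R⟩ := hfar Sm w' hbw
    have l1 := hlinkM z₁ (connectedComponentIn_subset _ _ hz₁cc) hz₁R
    have l2 := hlinkM w₁ (connectedComponentIn_subset _ _ hw₁cc) hw₁R
    rw [connectedComponentIn_eq hz₁cc, connectedComponentIn_eq l1,
      connectedComponentIn_eq hw₁cc, connectedComponentIn_eq l2]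
end
end

section
/- Let μ be a Borel probability measure on ℝ with compact support, and let E₋ and E₊ denote the infimum and supremum of supp μ. If z₀ ∈ ℂ ∖ supp μ satisfies dist(z₀, supp μ) ≥ 4(E₊ − E₋), then ∫ (z₀ − x)^{−2} dμ(x) ≠ 0 (equivalently, the derivative of the Cauchy transform G_μ at z₀ is nonzero). -/
open MeasureTheory Filter Topology

noncomputable section

set_option maxHeartbeats 1000000 in
/-- If `μ` is a compactly supported probability measure on `ℝ` and
`z₀ ∈ ℂ ∖ supp μ` satisfies `dist(z₀, supp μ) ≥ 4(E₊ − E₋)`, then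
`∫ (z₀ − x)⁻² dμ(x) ≠ 0`, i.e. `G_μ′(z₀) ≠ 0`. -/
theorem statement13 (μ : Measure ℝ) [IsProbabilityMeasure μ]
    (hcompact : IsCompact (msupp μ))
    (z₀ : ℂ) (hz₀ : z₀ ∉ (fun x : ℝ => (x : ℂ)) '' msupp μ)
    (hdist : 4 * (sSup (msupp μ) - sInf (msupp μ)) ≤
      Metric.infDist z₀ ((fun x : ℝ => (x : ℂ)) '' msupp μ)) :
    (∫ x, ((z₀ - (x : ℂ)) ^ 2)⁻¹ ∂μ) ≠ 0 := by
  classical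
  set S := msupp μ with hSdef
  -- μ is concentrated on S
  have hnull : μ Sᶜ = 0 := by
    apply measure_null_of_locally_null
    intro x hx
    simp only [hSdef, msupp, Set.mem_compl_iff, Set.mem_setOf_eq, not_forall] at hx
    obtain ⟨U, hUo, hxU, hU⟩ := hx
    refine ⟨U, mem_nhdsWithin_of_mem_nhds (hUo.mem_nhds hxU), ?_⟩
    exact le_antisymm (not_lt.mp hU) zero_le
  have hae : ∀ᵐ x ∂μ, x ∈ S := by
    rw [ae_iff]
    simpa [Set.compl_def] using hnull
  have hne : S.Nonempty := by
    by_contra h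
    rw [Set.not_nonempty_iff_eq_empty] at h
    have h0 : μ Set.univ = 0 := by
      rw [← Set.compl_empty, ← h]; exact hnull
    simp [measure_univ] at h0
  have hEm : sInf S ∈ S := hcompact.sInf_mem hne
  have hEp : sSup S ∈ S := hcompact.sSup_mem hne
  set T := (fun x : ℝ => (x : ℂ)) '' S with hTdef
  have hTc : IsClosed T := (hcompact.image Complex.continuous_ofReal).isClosed
  have hTne : T.Nonempty := hne.image _
  set d := Metric.infDist z₀ T with hddef
  have hdpos : 0 < d := (hTc.notMem_iff_infDist_pos hTne).mp hz₀
  have hdle : ∀ x ∈ S, d ≤ ‖z₀ - x‖ := by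
    intro x hx
    have h := Metric.infDist_le_dist_of_mem (x := z₀)
      (Set.mem_image_of_mem (fun x : ℝ => (x : ℂ)) hx)
    rwa [Complex.dist_eq] at h
  set Δ := sSup S - sInf S with hΔdef
  have hΔ0 : 0 ≤ Δ := sub_nonneg.2 (csInf_le_csSup hne hcompact.bddBelow hcompact.bddAbove)
  have hdΔ : 4 * Δ ≤ d := hdist
  set a : ℝ := (sInf S + sSup S) / 2 with hadef
  set c : ℂ := (z₀ - (a : ℂ)) ^ 2 with hcdef
  set r := ‖z₀ - (a : ℂ)‖ with hrdef
  -- r ≥ d - Δ/2 ≥ 7d/8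
  have hr7 : 7 / 8 * d ≤ r := by
    have h1 : d ≤ ‖z₀ - ((sInf S : ℝ) : ℂ)‖ := hdle _ hEm
    have h2 : ‖z₀ - ((sInf S : ℝ) : ℂ)‖ ≤ r + Δ / 2 := by
      have heq : z₀ - ((sInf S : ℝ) : ℂ) = (z₀ - (a : ℂ)) + ((a : ℂ) - ((sInf S : ℝ) : ℂ)) := by
        push_cast
        ring
      rw [heq]
      refine le_trans (norm_add_le _ _) ?_
      have h3 : ‖(a : ℂ) - ((sInf S : ℝ) : ℂ)‖ = Δ / 2 := by
        rw [← Complex.ofReal_sub, Complex.norm_real, Real.norm_eq_abs]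
        have : a - sInf S = Δ / 2 := by rw [hadef, hΔdef]; ring
        rw [this, abs_of_nonneg (by linarith)]
      rw [h3]
    linarith
  have hrpos : 0 < r := by linarith
  -- key pointwise estimates on S
  have key : ∀ x ∈ S, (1 : ℝ) / 2 ≤ (c * ((z₀ - (x : ℂ)) ^ 2)⁻¹).re ∧
      ‖((z₀ - (x : ℂ)) ^ 2)⁻¹‖ ≤ (d ^ 2)⁻¹ := by
    intro x hx
    set δ := |x - a| with hδdef
    have hδ : δ ≤ Δ / 2 := by
      have h1 : sInf S ≤ x := csInf_le hcompact.bddBelow hx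
      have h2 : x ≤ sSup S := le_csSup hcompact.bddAbove hx
      rw [hδdef, abs_le]; constructor <;> [skip; skip] <;>
        (rw [hadef]; first | linarith [hΔdef] | linarith)
    have hδr : 7 * δ ≤ r := by linarith
    have hδ0 : 0 ≤ δ := abs_nonneg _
    have habsxa : ‖(x : ℂ) - (a : ℂ)‖ = δ := by
      rw [← Complex.ofReal_sub, Complex.norm_real, Real.norm_eq_abs]
    set u := (z₀ - (x : ℂ)) ^ 2 with hudef
    have hzx_lb : r - δ ≤ ‖z₀ - (x : ℂ)‖ := by
      have heq : z₀ - (a : ℂ) = (z₀ - (x : ℂ)) + ((x : ℂ) - (a : ℂ)) := by ring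
      have := norm_add_le (z₀ - (x : ℂ)) ((x : ℂ) - (a : ℂ))
      rw [← heq, habsxa] at this
      linarith
    have hzx_ub : ‖z₀ - (x : ℂ)‖ ≤ r + δ := by
      have heq : z₀ - (x : ℂ) = (z₀ - (a : ℂ)) + ((a : ℂ) - (x : ℂ)) := by ring
      have habs : ‖(a : ℂ) - (x : ℂ)‖ = δ := by
        rw [← Complex.ofReal_sub, Complex.norm_real, Real.norm_eq_abs, abs_sub_comm]
      calc ‖z₀ - (x : ℂ)‖ ≤ r + ‖(a : ℂ) - (x : ℂ)‖ := by
            rw [heq] at *; exact norm_add_le _ _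
        _ = r + δ := by rw [habs]
    have hzxd : d ≤ ‖z₀ - (x : ℂ)‖ := hdle x hx
    have hupos : 0 < ‖u‖ := by
      rw [hudef, norm_pow]
      have h := lt_of_lt_of_le hdpos hzxd
      positivity
    have hune : u ≠ 0 := by
      intro h; rw [h] at hupos; simp at hupos
    have huabs : ‖u‖ = ‖z₀ - (x : ℂ)‖ ^ 2 := by
      rw [hudef, norm_pow]
    -- numerator bound
    have hnum : ‖c - u‖ ≤ δ * (2 * r + δ) := by
      have heq : c - u = ((x : ℂ) - (a : ℂ)) * ((z₀ - (a : ℂ)) + (z₀ - (x : ℂ))) := by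
        rw [hcdef, hudef]; ring
      rw [heq, norm_mul, habsxa]
      have : ‖(z₀ - (a : ℂ)) + (z₀ - (x : ℂ))‖ ≤ r + (r + δ) := by
        refine le_trans (norm_add_le _ _) ?_
        linarith
      nlinarith
    have hub : ‖c - u‖ ≤ 1 / 2 * ‖u‖ := by
      have h1 : δ * (2 * r + δ) ≤ 1 / 2 * (r - δ) ^ 2 := by nlinarith
      have h2 : (r - δ) ^ 2 ≤ ‖u‖ := by
        rw [huabs]
        have hrd : 0 ≤ r - δ := by linarith
        nlinarith
      linarith
    have hre : (1 : ℝ) / 2 ≤ (c * u⁻¹).re := by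
      have hdiff : ‖c * u⁻¹ - 1‖ ≤ 1 / 2 := by
        have heq : c * u⁻¹ - 1 = (c - u) * u⁻¹ := by
          field_simp
        rw [heq, norm_mul, norm_inv]
        calc ‖c - u‖ * (‖u‖)⁻¹
            ≤ (1 / 2 * ‖u‖) * (‖u‖)⁻¹ := by
              apply mul_le_mul_of_nonneg_right hub (by positivity)
          _ = 1 / 2 := by field_simp
      have h1 : (c * u⁻¹ - 1).re = (c * u⁻¹).re - 1 := by simp
      have h2 : |(c * u⁻¹ - 1).re| ≤ 1 / 2 :=
        le_trans (Complex.abs_re_le_norm _) hdiff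
      rw [h1] at h2
      rw [abs_le] at h2
      linarith [h2.1]
    refine ⟨hre, ?_⟩
    rw [norm_inv, huabs]
    apply inv_anti₀ (by positivity)
    nlinarith
  -- integrability
  have hmeas : Measurable fun x : ℝ => ((z₀ - (x : ℂ)) ^ 2)⁻¹ :=
    ((measurable_const.sub Complex.measurable_ofReal).pow_const 2).inv
  have hint : Integrable (fun x : ℝ => ((z₀ - (x : ℂ)) ^ 2)⁻¹) μ := by
    refine (integrable_const ((d ^ 2)⁻¹ : ℝ)).mono' hmeas.aestronglyMeasurable ?_
    filter_upwards [hae] with x hx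
    exact (key x hx).2
  have hintc : Integrable (fun x : ℝ => c * ((z₀ - (x : ℂ)) ^ 2)⁻¹) μ := hint.const_mul c
  -- integral of real parts
  have hremono : (1 : ℝ) / 2 ≤ ∫ x, (c * ((z₀ - (x : ℂ)) ^ 2)⁻¹).re ∂μ := by
    have := integral_mono_ae (integrable_const ((1 : ℝ) / 2)) hintc.re
      (by filter_upwards [hae] with x hx; exact (key x hx).1)
    simpa [measure_univ] using this
  intro h0
  have heq : ∫ x, (c * ((z₀ - (x : ℂ)) ^ 2)⁻¹).re ∂μ
      = (c * ∫ x, ((z₀ - (x : ℂ)) ^ 2)⁻¹ ∂μ).re := by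
    rw [← integral_const_mul]
    have h := integral_re (μ := μ) hintc
    simpa only [RCLike.re_to_complex] using h
  rw [h0, mul_zero, Complex.zero_re] at heq
  rw [heq] at hremono
  linarith
end
end
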